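/- arXiv:2602.19500 — 5 statements merged into one kernel-verified Lean document; each statement's English description precedes it below -/
import Mathlib

section
/- For α > 0, the inverse-gamma quantile function is strictly decreasing in the shape parameter: if F(α;x) = ∫₀^x ρ_α(y) dy with ρ_α(y) = y^{-α-1} e^{-1/y} / Γ(α), and H(α;·) denotes the inverse of F(α;·) on (0,1), then ∂_α log H(α;x) = -(1/(y·ρ_α(y))) · Cov(-log X, 1[X ≤ y]) < 0, where y = H(α;x) and X ~ Gamma⁻¹(α). In particular, for each fixed x ∈ (0,1), α ↦ H(α;x) is strictly decreasing. -/
open MeasureTheory Real Set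

noncomputable def igφ (a z : ℝ) : ℝ := z ^ (-a - 1) * Real.exp (-z⁻¹)

lemma igφ_pos {a z : ℝ} (hz : 0 < z) : 0 < igφ a z :=
  mul_pos (Real.rpow_pos_of_pos hz _) (Real.exp_pos _)

lemma igφ_meas (a : ℝ) : Measurable (igφ a) := by
  unfold igφ
  fun_prop

lemma igφ_contAt {a₀ z₀ : ℝ} (hz : 0 < z₀) :
    ContinuousAt (fun p : ℝ × ℝ => igφ p.1 p.2) (a₀, z₀) := by
  have h : (fun p : ℝ × ℝ => Real.exp ((-p.1 - 1) * Real.log p.2) * Real.exp (-p.2⁻¹))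
      =ᶠ[nhds (a₀, z₀)] fun p : ℝ × ℝ => igφ p.1 p.2 := by
    have : ∀ᶠ p : ℝ × ℝ in nhds (a₀, z₀), 0 < p.2 :=
      ContinuousAt.eventually_lt continuousAt_const (continuous_snd.continuousAt) hz
    filter_upwards [this] with p hp
    rw [igφ, Real.rpow_def_of_pos hp, mul_comm (Real.log p.2)]
  refine ContinuousAt.congr ?_ h
  apply ContinuousAt.mul
  · apply Real.continuous_exp.continuousAt.comp
    exact (continuous_fst.neg.sub continuous_const).continuousAt.mul
      ((continuous_snd.continuousAt (x := (a₀, z₀))).log hz.ne')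
  · exact Real.continuous_exp.continuousAt.comp
      ((continuous_snd.continuousAt (x := (a₀,z₀))).inv₀ hz.ne').neg

lemma igφ_le_sum {a b δ z : ℝ} (hz : 0 < z) (hδ : |a - b| ≤ δ) :
    igφ a z ≤ igφ (b - δ) z + igφ (b + δ) z := by
  rcases le_total 1 z with h1 | h1
  · have : z ^ (-a - 1) ≤ z ^ (-(b - δ) - 1) := by
      apply Real.rpow_le_rpow_of_exponent_le h1
      have := abs_le.1 hδ; linarith [this.1]
    have h2 : igφ a z ≤ igφ (b - δ) z :=
      mul_le_mul_of_nonneg_right this (Real.exp_pos _).le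
    have h3 : 0 < igφ (b + δ) z := igφ_pos hz
    linarith
  · have : z ^ (-a - 1) ≤ z ^ (-(b + δ) - 1) := by
      apply Real.rpow_le_rpow_of_exponent_ge hz h1
      have := abs_le.1 hδ; linarith [this.2]
    have h2 : igφ a z ≤ igφ (b + δ) z :=
      mul_le_mul_of_nonneg_right this (Real.exp_pos _).le
    have h3 : 0 < igφ (b - δ) z := igφ_pos hz
    linarith

lemma abs_log_le {z δ : ℝ} (hz : 0 < z) (hδ : 0 < δ) :
    |Real.log z| ≤ δ⁻¹ * (z ^ δ + z ^ (-δ)) := by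
  rcases le_total 1 z with h1 | h1
  · have hl : 0 ≤ Real.log z := Real.log_nonneg h1
    rw [abs_of_nonneg hl]
    have : Real.log z = δ⁻¹ * Real.log (z ^ δ) := by
      rw [Real.log_rpow hz]; field_simp; try ring
    rw [this]
    have h2 : Real.log (z ^ δ) ≤ z ^ δ - 1 :=
      Real.log_le_sub_one_of_pos (Real.rpow_pos_of_pos hz _)
    have h3 : 0 ≤ z ^ (-δ) := (Real.rpow_pos_of_pos hz _).le
    have h4 : (0:ℝ) < δ⁻¹ := by positivity
    nlinarith
  · have hl : Real.log z ≤ 0 := Real.log_nonpos hz.le h1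
    rw [abs_of_nonpos hl]
    have : -Real.log z = δ⁻¹ * Real.log (z ^ (-δ)) := by
      rw [Real.log_rpow hz]; field_simp; try ring
    rw [this]
    have h2 : Real.log (z ^ (-δ)) ≤ z ^ (-δ) - 1 :=
      Real.log_le_sub_one_of_pos (Real.rpow_pos_of_pos hz _)
    have h3 : 0 ≤ z ^ δ := (Real.rpow_pos_of_pos hz _).le
    have h4 : (0:ℝ) < δ⁻¹ := by positivity
    nlinarith

lemma log_igφ_le {a δ z : ℝ} (hz : 0 < z) (hδ : 0 < δ) :
    |Real.log z| * igφ a z ≤ δ⁻¹ * (igφ (a - δ) z + igφ (a + δ) z) := by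
  have h1 := abs_log_le hz hδ
  have h2 : (z ^ δ + z ^ (-δ)) * igφ a z = igφ (a - δ) z + igφ (a + δ) z := by
    unfold igφ
    rw [add_mul, ← mul_assoc, ← mul_assoc, ← Real.rpow_add hz, ← Real.rpow_add hz]
    ring_nf
  calc |Real.log z| * igφ a z ≤ (δ⁻¹ * (z ^ δ + z ^ (-δ))) * igφ a z :=
        mul_le_mul_of_nonneg_right h1 (igφ_pos hz).le
    _ = δ⁻¹ * (igφ (a - δ) z + igφ (a + δ) z) := by rw [mul_assoc, h2]

lemma exp_neg_inv_le (n : ℕ) {z : ℝ} (hz : 0 < z) :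
    Real.exp (-z⁻¹) ≤ n.factorial * z ^ n := by
  have h1 : (z⁻¹) ^ n / (n.factorial : ℝ) ≤ Real.exp z⁻¹ := by
    calc (z⁻¹) ^ n / (n.factorial : ℝ) ≤ ∑ i ∈ Finset.range (n+1), (z⁻¹) ^ i / (i.factorial : ℝ) :=
          Finset.single_le_sum (f := fun i => (z⁻¹:ℝ) ^ i / (i.factorial : ℝ))
            (fun i _ => by positivity) (Finset.self_mem_range_succ n)
      _ ≤ Real.exp z⁻¹ := by
          simpa using Real.sum_le_exp_of_nonneg (by positivity : (0:ℝ) ≤ z⁻¹) (n+1)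
  rw [Real.exp_neg]
  have hp : (0:ℝ) < (z⁻¹) ^ n / (n.factorial : ℝ) := by positivity
  calc (Real.exp z⁻¹)⁻¹ ≤ ((z⁻¹) ^ n / (n.factorial : ℝ))⁻¹ := by gcongr
    _ = n.factorial * z ^ n := by rw [inv_div, div_eq_mul_inv, inv_pow, inv_inv]
  
lemma igφ_le_const (a : ℝ) {y : ℝ} (hy : 0 < y) : ∃ C : ℝ, ∀ z ∈ Ioc (0:ℝ) y, igφ a z ≤ C := by
  obtain ⟨n, hna⟩ : ∃ n : ℕ, a + 1 ≤ (n:ℝ) :=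
    ⟨⌈a⌉₊ + 2, by have := Nat.le_ceil a; push_cast; linarith⟩
  refine ⟨n.factorial * y ^ ((n:ℝ) - a - 1), fun z hz => ?_⟩
  have hz0 : 0 < z := hz.1
  have h1 : igφ a z ≤ n.factorial * z ^ ((n:ℝ) - a - 1) := by
    have h2 := exp_neg_inv_le n hz0
    have h3 : z ^ (-a-1) * ((n.factorial : ℝ) * z ^ n) = n.factorial * z ^ ((n:ℝ) - a - 1) := by
      rw [show ((n:ℝ) - a - 1) = (-a-1) + (n:ℝ) by ring, Real.rpow_add hz0, Real.rpow_natCast]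
      ring
    calc igφ a z ≤ z ^ (-a-1) * ((n.factorial:ℝ) * z ^ n) :=
          mul_le_mul_of_nonneg_left h2 (Real.rpow_pos_of_pos hz0 _).le
      _ = _ := h3
  have h4 : z ^ ((n:ℝ) - a - 1) ≤ y ^ ((n:ℝ) - a - 1) :=
    Real.rpow_le_rpow hz0.le hz.2 (by linarith)
  calc igφ a z ≤ n.factorial * z ^ ((n:ℝ) - a - 1) := h1
    _ ≤ _ := by
      apply mul_le_mul_of_nonneg_left h4 (by positivity)

lemma igφ_integrableOn_Ioc (a y : ℝ) : IntegrableOn (igφ a) (Ioc 0 y) := by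
  rcases le_or_gt y 0 with hy | hy
  · rw [Set.Ioc_eq_empty_of_le hy]; simp [IntegrableOn]
  obtain ⟨C, hC⟩ := igφ_le_const a hy
  apply Integrable.mono' (g := fun _ => C)
  · exact integrableOn_const (by simp)
  · exact (igφ_meas a).aestronglyMeasurable
  · rw [ae_restrict_iff' measurableSet_Ioc]
    filter_upwards with z hz
    rw [Real.norm_eq_abs, abs_of_pos (igφ_pos hz.1)]
    exact hC z hz

lemma igφ_integrableOn_Ioi {a : ℝ} (ha : 0 < a) : IntegrableOn (igφ a) (Ioi 0) := by
  rw [← Set.Ioc_union_Ioi_eq_Ioi (zero_le_one)]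
  apply (igφ_integrableOn_Ioc a 1).union
  apply Integrable.mono' (g := fun z => z ^ (-a-1))
  · exact integrableOn_Ioi_rpow_of_lt (by linarith) zero_lt_one
  · exact (igφ_meas a).aestronglyMeasurable
  · rw [ae_restrict_iff' measurableSet_Ioi]
    filter_upwards with z hz
    have hz0 : (0:ℝ) < z := lt_trans zero_lt_one hz
    rw [Real.norm_eq_abs, abs_of_pos (igφ_pos hz0)]
    calc igφ a z ≤ z ^ (-a-1) * 1 := by
          apply mul_le_mul_of_nonneg_left _ (Real.rpow_pos_of_pos hz0 _).le
          exact Real.exp_le_one_iff.2 (neg_nonpos.2 (by positivity))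
      _ = z ^ (-a-1) := mul_one _

lemma log_igφ_integrable_aux {a δ : ℝ} (hδ : 0 < δ) {s : Set ℝ} (hs : MeasurableSet s)
    (hs' : s ⊆ Ioi 0)
    (h1 : IntegrableOn (igφ (a - δ)) s) (h2 : IntegrableOn (igφ (a + δ)) s) :
    IntegrableOn (fun z => Real.log z * igφ a z) s := by
  apply Integrable.mono' (g := fun z => δ⁻¹ * (igφ (a - δ) z + igφ (a + δ) z))
  · exact ((h1.add h2).const_mul _)
  · exact (Real.measurable_log.mul (igφ_meas a)).aestronglyMeasurable
  · rw [ae_restrict_iff' hs]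
    filter_upwards with z hz
    have hz0 := hs' hz
    rw [Real.norm_eq_abs, abs_mul, abs_of_pos (igφ_pos hz0)]
    exact log_igφ_le hz0 hδ

lemma log_igφ_integrableOn_Ioc (a y : ℝ) :
    IntegrableOn (fun z => Real.log z * igφ a z) (Ioc 0 y) :=
  log_igφ_integrable_aux zero_lt_one measurableSet_Ioc (fun z hz => hz.1)
    (igφ_integrableOn_Ioc _ y) (igφ_integrableOn_Ioc _ y)

lemma log_igφ_integrableOn_Ioi {a : ℝ} (ha : 0 < a) :
    IntegrableOn (fun z => Real.log z * igφ a z) (Ioi 0) :=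
  log_igφ_integrable_aux (half_pos ha) measurableSet_Ioi (fun z hz => hz)
    (by rw [show a - a/2 = a/2 by ring]; exact igφ_integrableOn_Ioi (half_pos ha))
    (igφ_integrableOn_Ioi (by linarith))

noncomputable def igΦ (a y : ℝ) : ℝ := ∫ z in Ioc (0:ℝ) y, igφ a z
noncomputable def igΨ (a y : ℝ) : ℝ := ∫ z in Ioc (0:ℝ) y, (-Real.log z) * igφ a z
noncomputable def igG (a : ℝ) : ℝ := ∫ z in Ioi (0:ℝ), igφ a z
noncomputable def igG' (a : ℝ) : ℝ := ∫ z in Ioi (0:ℝ), (-Real.log z) * igφ a z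

lemma hasDerivAt_igφ {z : ℝ} (hz : 0 < z) (a : ℝ) :
    HasDerivAt (fun b => igφ b z) ((-Real.log z) * igφ a z) a := by
  have h : (fun b => igφ b z) = fun b => Real.exp ((-b - 1) * Real.log z) * Real.exp (-z⁻¹) := by
    funext b; rw [igφ, Real.rpow_def_of_pos hz, mul_comm (Real.log z)]
  rw [h]
  have d1 : HasDerivAt (fun b : ℝ => (-b - 1) * Real.log z) (-1 * Real.log z) a :=
    (((hasDerivAt_id a).neg.sub_const 1)).mul_const (Real.log z)
  have d2 := (d1.exp).mul_const (Real.exp (-z⁻¹))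
  refine d2.congr_deriv ?_
  rw [igφ, Real.rpow_def_of_pos hz, mul_comm (Real.log z)]
  ring

lemma neglog_igφ_aesm (a : ℝ) (μ : Measure ℝ) :
    AEStronglyMeasurable (fun z => (-Real.log z) * igφ a z) μ :=
  ((Real.measurable_log.neg).mul (igφ_meas a)).aestronglyMeasurable

lemma hasDerivAt_integral_igφ {α δ : ℝ} (hδ : 0 < δ) {s : Set ℝ} (hs : MeasurableSet s)
    (hs' : s ⊆ Ioi 0)
    (h1 : IntegrableOn (igφ (α - 2*δ)) s) (h2 : IntegrableOn (igφ α) s)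
    (h3 : IntegrableOn (igφ (α + 2*δ)) s) :
    HasDerivAt (fun a => ∫ z in s, igφ a z) (∫ z in s, (-Real.log z) * igφ α z) α := by
  have key := hasDerivAt_integral_of_dominated_loc_of_deriv_le (μ := volume.restrict s)
    (F := fun a z => igφ a z) (F' := fun a z => (-Real.log z) * igφ a z) (x₀ := α)
    (bound := fun z => δ⁻¹ * ((igφ (α - 2*δ) z + igφ α z) + (igφ α z + igφ (α + 2*δ) z)))
    (s := Metric.ball α δ) (Metric.ball_mem_nhds α hδ)
    (Filter.Eventually.of_forall fun a => (igφ_meas a).aestronglyMeasurable)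
    h2
    (neglog_igφ_aesm α _)
    ?_ (((h1.add h2).add (h2.add h3)).const_mul _) ?_
  · exact key.2
  · rw [ae_restrict_iff' hs]
    filter_upwards with z hz b hb
    have hz0 : 0 < z := hs' hz
    rw [Real.norm_eq_abs, abs_mul, abs_neg, abs_of_pos (igφ_pos hz0)]
    have step1 : |Real.log z| * igφ b z ≤ δ⁻¹ * (igφ (b - δ) z + igφ (b + δ) z) :=
      log_igφ_le hz0 hδ
    have hb' : |b - α| ≤ δ := by
      rw [Metric.mem_ball, Real.dist_eq] at hb; exact hb.le
    have e1 : igφ (b - δ) z ≤ igφ (α - 2*δ) z + igφ α z := by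
      have h := igφ_le_sum (b := α - δ) (δ := δ) hz0
        (by rw [show b - δ - (α - δ) = b - α by ring]; exact hb')
      rwa [show α - δ - δ = α - 2*δ by ring, show α - δ + δ = α by ring] at h
    have e2 : igφ (b + δ) z ≤ igφ α z + igφ (α + 2*δ) z := by
      have h := igφ_le_sum (b := α + δ) (δ := δ) hz0
        (by rw [show b + δ - (α + δ) = b - α by ring]; exact hb')
      rwa [show α + δ - δ = α by ring, show α + δ + δ = α + 2*δ by ring] at h
    have : |Real.log z| ≥ 0 := abs_nonneg _
    calc |Real.log z| * igφ b z ≤ δ⁻¹ * (igφ (b - δ) z + igφ (b + δ) z) := step1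
      _ ≤ δ⁻¹ * ((igφ (α - 2*δ) z + igφ α z) + (igφ α z + igφ (α + 2*δ) z)) := by
          apply mul_le_mul_of_nonneg_left _ (by positivity)
          linarith
  · rw [ae_restrict_iff' hs]
    filter_upwards with z hz b _
    exact hasDerivAt_igφ (hs' hz) b

lemma hasDerivAt_igΦ (α y : ℝ) : HasDerivAt (fun a => igΦ a y) (igΨ α y) α :=
  hasDerivAt_integral_igφ zero_lt_one measurableSet_Ioc (fun z hz => hz.1)
    (igφ_integrableOn_Ioc _ y) (igφ_integrableOn_Ioc _ y) (igφ_integrableOn_Ioc _ y)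

lemma hasDerivAt_igG {α : ℝ} (hα : 0 < α) : HasDerivAt igG (igG' α) α := by
  have h := hasDerivAt_integral_igφ (δ := α/4) (by linarith) measurableSet_Ioi
    (fun z hz => hz)
    (by rw [show α - 2*(α/4) = α/2 by ring]; exact igφ_integrableOn_Ioi (by linarith))
    (igφ_integrableOn_Ioi hα)
    (igφ_integrableOn_Ioi (by linarith))
  exact h

lemma igG_eq_Gamma {a : ℝ} (ha : 0 < a) : igG a = Real.Gamma a := by
  rw [Real.Gamma_eq_integral ha, igG]
  rw [← integral_comp_rpow_Ioi (fun t => Real.exp (-t) * t ^ (a-1)) (p := -1) (by norm_num)]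
  apply setIntegral_congr_fun measurableSet_Ioi
  intro z hz
  have hz0 : (0:ℝ) < z := hz
  simp only [smul_eq_mul]
  rw [Real.rpow_neg_one, igφ]
  rw [Real.inv_rpow hz0.le, ← Real.rpow_neg hz0.le]
  rw [show ((-1:ℝ) - 1) = (-2:ℝ) by norm_num]
  rw [show (-a - 1 : ℝ) = (-2) + (-(a-1)) by ring, Real.rpow_add hz0]
  norm_num
  ring

lemma igG_pos {a : ℝ} (ha : 0 < a) : 0 < igG a := by
  rw [igG_eq_Gamma ha]; exact Real.Gamma_pos_of_pos ha

/-- Density of the inverse-gamma distribution with shape `a` at `y`. -/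
noncomputable def invGammaPDF (a y : ℝ) : ℝ :=
  y ^ (-a - 1) * Real.exp (-y⁻¹) / Real.Gamma a

/-- CDF of the inverse-gamma distribution: `F(a; x) = ∫₀^x ρ_a(y) dy`. -/
noncomputable def invGammaCDF (a x : ℝ) : ℝ :=
  ∫ y in Set.Ioc (0 : ℝ) x, invGammaPDF a y

/-- `Cov(-log X, 1[X ≤ y])` for `X ~ Gamma⁻¹(a)`. -/
noncomputable def invGammaCov (a y : ℝ) : ℝ :=
  (∫ z in Set.Ioi (0 : ℝ), (if z ≤ y then -Real.log z else 0) * invGammaPDF a z)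
    - (∫ z in Set.Ioi (0 : ℝ), (-Real.log z) * invGammaPDF a z)
      * (∫ z in Set.Ioi (0 : ℝ), (if z ≤ y then (1 : ℝ) else 0) * invGammaPDF a z)

lemma pdf_eq (a z : ℝ) : invGammaPDF a z = igφ a z / Real.Gamma a := rfl

lemma neglog_igφ_integrableOn {a : ℝ} {s : Set ℝ}
    (h : IntegrableOn (fun z => Real.log z * igφ a z) s) :
    IntegrableOn (fun z => (-Real.log z) * igφ a z) s := by
  rw [show (fun z => (-Real.log z) * igφ a z) = fun z => -(Real.log z * igφ a z) from
    funext fun z => by ring]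
  exact h.neg

lemma CDF_eq {a : ℝ} (ha : 0 < a) (y : ℝ) : invGammaCDF a y = igΦ a y / igG a := by
  rw [invGammaCDF, igG_eq_Gamma ha, igΦ]
  simp_rw [pdf_eq]
  rw [integral_div]

lemma integral_ite_Ioc (y : ℝ) (f : ℝ → ℝ) :
    (∫ z in Ioi (0:ℝ), (if z ≤ y then f z else 0)) = ∫ z in Ioc (0:ℝ) y, f z := by
  have h : (fun z => if z ≤ y then f z else 0) = (Iic y).indicator f := by
    funext z; simp [Set.indicator_apply, Set.mem_Iic]
  rw [h, integral_indicator measurableSet_Iic, Measure.restrict_restrict measurableSet_Iic,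
    Set.Iic_inter_Ioi]

lemma cov_eq {a : ℝ} (ha : 0 < a) (y : ℝ) :
    invGammaCov a y = (igΨ a y * igG a - igΦ a y * igG' a) / (igG a)^2 := by
  have hG : igG a ≠ 0 := (igG_pos ha).ne'
  have I1 : (∫ z in Ioi (0:ℝ), (if z ≤ y then -Real.log z else 0) * invGammaPDF a z)
      = igΨ a y / igG a := by
    rw [show (fun z => (if z ≤ y then -Real.log z else 0) * invGammaPDF a z)
        = fun z => (if z ≤ y then (-Real.log z) * igφ a z / Real.Gamma a else 0) from
      funext fun z => by rw [pdf_eq]; split <;> ring]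
    rw [show (fun z => (if z ≤ y then (-Real.log z) * igφ a z / Real.Gamma a else 0))
        = fun z => (if z ≤ y then (-Real.log z) * igφ a z else 0) / Real.Gamma a from
      funext fun z => by split <;> simp]
    rw [integral_div, integral_ite_Ioc, ← igΨ, igG_eq_Gamma ha]
  have I2 : (∫ z in Ioi (0:ℝ), (-Real.log z) * invGammaPDF a z) = igG' a / igG a := by
    simp_rw [pdf_eq, mul_div_assoc']
    rw [integral_div, ← igG', igG_eq_Gamma ha]
  have I3 : (∫ z in Ioi (0:ℝ), (if z ≤ y then (1:ℝ) else 0) * invGammaPDF a z)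
      = igΦ a y / igG a := by
    rw [show (fun z => (if z ≤ y then (1:ℝ) else 0) * invGammaPDF a z)
        = fun z => (if z ≤ y then igφ a z else 0) / Real.Gamma a from
      funext fun z => by rw [pdf_eq]; split <;> simp]
    rw [integral_div, integral_ite_Ioc, ← igΦ, igG_eq_Gamma ha]
  rw [invGammaCov, I1, I2, I3]
  field_simp

lemma hasDerivAt_CDF {a : ℝ} (ha : 0 < a) (y : ℝ) :
    HasDerivAt (fun s => invGammaCDF s y) (invGammaCov a y) a := by
  have hev : (fun s => invGammaCDF s y) =ᶠ[nhds a] fun s => igΦ s y / igG s := by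
    filter_upwards [eventually_gt_nhds ha] with s hs
    exact CDF_eq hs y
  have hd : HasDerivAt (fun s => igΦ s y / igG s)
      ((igΨ a y * igG a - igΦ a y * igG' a) / (igG a)^2) a :=
    (hasDerivAt_igΦ a y).div (hasDerivAt_igG ha) (igG_pos ha).ne'
  rw [cov_eq ha y]
  exact hd.congr_of_eventuallyEq hev

lemma setIntegral_igφ_pos (a : ℝ) {s : Set ℝ} (hs : MeasurableSet s) (hs0 : s ⊆ Ioi 0)
    (hint : IntegrableOn (igφ a) s) {u v : ℝ} (huv : u < v) (huvs : Ioo u v ⊆ s) :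
    0 < ∫ z in s, igφ a z := by
  rw [setIntegral_pos_iff_support_of_nonneg_ae]
  · apply lt_of_lt_of_le _ (measure_mono (show Ioo u v ⊆ (Function.support (igφ a)) ∩ s from
      fun z hz => ⟨(igφ_pos (hs0 (huvs hz))).ne', huvs hz⟩))
    rw [Real.volume_Ioo]
    simp [huv]
  · rw [Filter.EventuallyLE, ae_restrict_iff' hs]
    filter_upwards with z hz
    exact (igφ_pos (hs0 hz)).le
  · exact hint

lemma igΦ_pos (a : ℝ) {y : ℝ} (hy : 0 < y) : 0 < igΦ a y :=
  setIntegral_igφ_pos a measurableSet_Ioc (fun z hz => hz.1) (igφ_integrableOn_Ioc a y)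
    hy Ioo_subset_Ioc_self

lemma igΦ_mono (a : ℝ) {y₁ y₂ : ℝ} (h : y₁ ≤ y₂) : igΦ a y₁ ≤ igΦ a y₂ := by
  apply setIntegral_mono_set (igφ_integrableOn_Ioc a y₂)
  · rw [Filter.EventuallyLE, ae_restrict_iff' measurableSet_Ioc]
    filter_upwards with z hz
    exact (igφ_pos hz.1).le
  · exact (Set.Ioc_subset_Ioc_right h).eventuallyLE

lemma igΦ_strictMono (a : ℝ) {y₁ y₂ : ℝ} (h0 : 0 < y₁) (h : y₁ < y₂) :
    igΦ a y₁ < igΦ a y₂ := by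
  have hsplit : igΦ a y₂ = igΦ a y₁ + ∫ z in Ioc y₁ y₂, igφ a z := by
    rw [igΦ, igΦ, ← setIntegral_union (Set.Ioc_disjoint_Ioc_of_le le_rfl) measurableSet_Ioc
      (igφ_integrableOn_Ioc a y₁) ((igφ_integrableOn_Ioc a y₂).mono_set
        (Set.Ioc_subset_Ioc_left h0.le)),
      Set.Ioc_union_Ioc_eq_Ioc h0.le h.le]
  rw [hsplit]
  have : 0 < ∫ z in Ioc y₁ y₂, igφ a z :=
    setIntegral_igφ_pos a measurableSet_Ioc (fun z hz => lt_trans h0 hz.1)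
      ((igφ_integrableOn_Ioc a y₂).mono_set (Set.Ioc_subset_Ioc_left h0.le)) h
      Ioo_subset_Ioc_self
  linarith

lemma CDF_mono {a : ℝ} (ha : 0 < a) {y₁ y₂ : ℝ} (h : y₁ ≤ y₂) :
    invGammaCDF a y₁ ≤ invGammaCDF a y₂ := by
  rw [CDF_eq ha, CDF_eq ha]
  exact (div_le_div_iff_of_pos_right (igG_pos ha)).2 (igΦ_mono a h)
  
lemma CDF_strictMono {a : ℝ} (ha : 0 < a) {y₁ y₂ : ℝ} (h0 : 0 < y₁) (h : y₁ < y₂) :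
    invGammaCDF a y₁ < invGammaCDF a y₂ := by
  rw [CDF_eq ha, CDF_eq ha]
  exact (div_lt_div_iff_of_pos_right (igG_pos ha)).2 (igΦ_strictMono a h0 h)

lemma cov_pos {a y : ℝ} (ha : 0 < a) (hy : 0 < y) : 0 < invGammaCov a y := by
  set B := ∫ z in Ioi y, (-Real.log z) * igφ a z with hB_def
  set Phi2 := ∫ z in Ioi y, igφ a z with hPhi2_def
  have hIoiy : Ioi y ⊆ Ioi (0:ℝ) := Set.Ioi_subset_Ioi hy.le
  have hintPhi2 : IntegrableOn (igφ a) (Ioi y) := (igφ_integrableOn_Ioi ha).mono_set hIoiy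
  have hintB : IntegrableOn (fun z => (-Real.log z) * igφ a z) (Ioi y) :=
    neglog_igφ_integrableOn ((log_igφ_integrableOn_Ioi ha).mono_set hIoiy)
  have hintΨ : IntegrableOn (fun z => (-Real.log z) * igφ a z) (Ioc 0 y) :=
    neglog_igφ_integrableOn (log_igφ_integrableOn_Ioc a y)
  have split1 : igG a = igΦ a y + Phi2 := by
    rw [igG, ← Set.Ioc_union_Ioi_eq_Ioi hy.le,
      setIntegral_union Set.Ioc_disjoint_Ioi_same measurableSet_Ioi
        (igφ_integrableOn_Ioc a y) hintPhi2, igΦ]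
  have split2 : igG' a = igΨ a y + B := by
    rw [igG', ← Set.Ioc_union_Ioi_eq_Ioi hy.le,
      setIntegral_union Set.Ioc_disjoint_Ioi_same measurableSet_Ioi hintΨ hintB, igΨ]
  -- Ψ > (-log y) Φ
  have hd_int : IntegrableOn (fun z => (Real.log y - Real.log z) * igφ a z) (Ioc 0 y) := by
    have h1 : IntegrableOn (fun z => Real.log y * igφ a z) (Ioc 0 y) :=
      (igφ_integrableOn_Ioc a y).const_mul _
    have := h1.sub (log_igφ_integrableOn_Ioc a y)
    simpa [sub_mul, Pi.sub_def] using this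
  have hΨ : (-Real.log y) * igΦ a y < igΨ a y := by
    have key : 0 < ∫ z in Ioc (0:ℝ) y, (Real.log y - Real.log z) * igφ a z := by
      rw [setIntegral_pos_iff_support_of_nonneg_ae]
      · apply lt_of_lt_of_le _ (measure_mono (show Ioo 0 y ⊆ _ ∩ Ioc 0 y from
          fun z hz => ⟨by
            have hlog : Real.log z < Real.log y := Real.log_lt_log hz.1 hz.2
            have hφ := igφ_pos (a := a) hz.1
            exact Function.mem_support.2 (ne_of_gt (mul_pos (by linarith) hφ)), 
            Ioo_subset_Ioc_self hz⟩))
        rw [Real.volume_Ioo]; simp [hy]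
      · rw [Filter.EventuallyLE, ae_restrict_iff' measurableSet_Ioc]
        filter_upwards with z hz
        have hlog : Real.log z ≤ Real.log y := Real.log_le_log hz.1 hz.2
        have := igφ_pos (a := a) hz.1
        simp only [Pi.zero_apply]
        nlinarith
      · exact hd_int
    have expand : (∫ z in Ioc (0:ℝ) y, (Real.log y - Real.log z) * igφ a z)
        = igΨ a y - (-Real.log y) * igΦ a y := by
      rw [igΨ, igΦ, ← integral_const_mul]
      rw [← integral_sub hintΨ ((igφ_integrableOn_Ioc a y).const_mul _)]
      congr 1; funext z; ring
    linarith [expand ▸ key]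
  have hB : B ≤ (-Real.log y) * Phi2 := by
    rw [hPhi2_def, ← integral_const_mul]
    apply setIntegral_mono_on hintB (hintPhi2.const_mul _) measurableSet_Ioi
    intro z hz
    have hz0 : 0 < z := hIoiy hz
    have hlog : Real.log y ≤ Real.log z := Real.log_le_log hy (le_of_lt hz)
    have := igφ_pos (a := a) hz0
    nlinarith
  have hΦ : 0 < igΦ a y := igΦ_pos a hy
  have hPhi2 : 0 < Phi2 :=
    setIntegral_igφ_pos a measurableSet_Ioi hIoiy hintPhi2 (lt_add_one y) Ioo_subset_Ioi_self
  rw [cov_eq ha y]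
  apply div_pos _ (pow_pos (igG_pos ha) 2)
  rw [split1, split2]
  nlinarith [mul_lt_mul_of_pos_right hΨ hPhi2, mul_le_mul_of_nonneg_left hB hΦ.le]

lemma igφ_intervalIntegrable {a : ℝ} {u v : ℝ} (hu : 0 < u) (hv : 0 < v) :
    IntervalIntegrable (igφ a) volume u v := by
  rw [intervalIntegrable_iff]
  exact (igφ_integrableOn_Ioc a (max u v)).mono_set
    (by rw [Set.uIoc]; exact Set.Ioc_subset_Ioc_left (lt_min hu hv).le)

lemma igΦ_sub_eq {a t y₀ : ℝ} (ht : 0 < t) (hy₀ : 0 < y₀) :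
    igΦ a t - igΦ a y₀ = ∫ z in y₀..t, igφ a z := by
  have h1 : igΦ a t = ∫ z in (0:ℝ)..t, igφ a z :=
    (intervalIntegral.integral_of_le ht.le).symm
  have h2 : igΦ a y₀ = ∫ z in (0:ℝ)..y₀, igφ a z :=
    (intervalIntegral.integral_of_le hy₀.le).symm
  rw [h1, h2, intervalIntegral.integral_interval_sub_left
    (by rw [intervalIntegrable_iff, Set.uIoc_of_le ht.le]; exact igφ_integrableOn_Ioc a t)
    (by rw [intervalIntegrable_iff, Set.uIoc_of_le hy₀.le]; exact igφ_integrableOn_Ioc a y₀)]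

section main
variable {H : ℝ → ℝ → ℝ}
  (hH : ∀ a : ℝ, 0 < a → ∀ x ∈ Set.Ioo (0 : ℝ) 1,
      0 < H a x ∧ invGammaCDF a (H a x) = x)
  {α : ℝ} (hα : 0 < α) {x : ℝ} (hx : x ∈ Set.Ioo (0 : ℝ) 1)

include hH hα hx

lemma tendsto_H : Filter.Tendsto (fun a => H a x) (nhds α) (nhds (H α x)) := by
  obtain ⟨hy₀, hFy₀⟩ := hH α hα x hx
  set y₀ := H α x with hy₀def
  rw [Metric.tendsto_nhds]
  intro ε hε
  set ε' := min ε (y₀/2) with hε'def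
  have hε' : 0 < ε' := lt_min hε (by linarith)
  have hε'le : ε' ≤ ε := min_le_left _ _
  have hε'y : ε' ≤ y₀/2 := min_le_right _ _
  clear_value ε'
  have hylow : 0 < y₀ - ε' := by linarith
  have h1 : invGammaCDF α (y₀ - ε') < x := by
    rw [← hFy₀]; exact CDF_strictMono hα hylow (by linarith)
  have h2 : x < invGammaCDF α (y₀ + ε') := by
    rw [← hFy₀]; exact CDF_strictMono hα hy₀ (by linarith)
  have e1 : ∀ᶠ a in nhds α, invGammaCDF a (y₀ - ε') < x :=
    (hasDerivAt_CDF hα (y₀ - ε')).continuousAt.eventually_lt_const h1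
  have e2 : ∀ᶠ a in nhds α, x < invGammaCDF a (y₀ + ε') :=
    (hasDerivAt_CDF hα (y₀ + ε')).continuousAt.eventually_const_lt h2
  have e3 : ∀ᶠ a in nhds α, 0 < a := eventually_gt_nhds hα
  filter_upwards [e1, e2, e3] with a h1a h2a h0a
  obtain ⟨hHa0, hFa⟩ := hH a h0a x hx
  rw [Real.dist_eq, abs_lt]
  constructor
  · rcases lt_or_ge (y₀ - ε') (H a x) with h | h
    · linarith
    · exfalso
      have hm : invGammaCDF a (H a x) ≤ invGammaCDF a (y₀ - ε') := CDF_mono h0a h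
      rw [hFa] at hm; linarith
  · rcases lt_or_ge (H a x) (y₀ + ε') with h | h
    · linarith
    · exfalso
      have hm : invGammaCDF a (y₀ + ε') ≤ invGammaCDF a (H a x) := CDF_mono h0a h
      rw [hFa] at hm; linarith

set_option maxHeartbeats 1000000 in
lemma hasDerivAt_H :
    HasDerivAt (fun a => H a x)
      (-(igG α * invGammaCov α (H α x)) / igφ α (H α x)) α := by
  have htd := tendsto_H hH hα hx
  obtain ⟨hy₀, hFy₀⟩ := hH α hα x hx
  set y₀ := H α x with hy₀def
  set c := invGammaCov α y₀ with hcdef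
  set ρ := igφ α y₀ with hρdef
  set Gα := igG α with hGdef
  have hρ : 0 < ρ := by rw [hρdef]; exact igφ_pos hy₀
  have hGα : 0 < Gα := by rw [hGdef]; exact igG_pos hα
  have hg0 : HasDerivAt (fun s => invGammaCDF s y₀) c α := by
    rw [hcdef]; exact hasDerivAt_CDF hα y₀
  have hGcont : Filter.Tendsto igG (nhds α) (nhds Gα) := by
    rw [hGdef]; exact (hasDerivAt_igG hα).continuousAt
  have hφcont : ContinuousAt (fun p : ℝ × ℝ => igφ p.1 p.2) (α, y₀) := igφ_contAt hy₀
  clear_value y₀ c ρ Gα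
  clear hcdef hGdef
  set Dy : ℝ := -(Gα * c) / ρ with hDydef
  clear_value Dy
  rw [hasDerivAt_iff_isLittleO, Asymptotics.isLittleO_iff]
  intro C hC
  set K : ℝ := 2/ρ * ((Gα+1) * (|c|+1)) with hKdef
  have hK : 0 < K := by rw [hKdef]; positivity
  set m₁ : ℝ := min 1 ((C*ρ/4)/(|c|+1)) with hm₁def
  have hm₁ : 0 < m₁ := by rw [hm₁def]; exact lt_min one_pos (by positivity)
  set m₂ : ℝ := min 1 ((C*ρ/4)/(Gα+1)) with hm₂def
  have hm₂ : 0 < m₂ := by rw [hm₂def]; exact lt_min one_pos (by positivity)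
  set εφ : ℝ := min (ρ/2) ((C*ρ/4)/K) with hεφdef
  have hεφ : 0 < εφ := by rw [hεφdef]; exact lt_min (by positivity) (by positivity)
  have hm₁1 : m₁ ≤ 1 := by rw [hm₁def]; exact min_le_left _ _
  have hm₂1 : m₂ ≤ 1 := by rw [hm₂def]; exact min_le_left _ _
  have hεφρ : εφ ≤ ρ/2 := by rw [hεφdef]; exact min_le_left _ _
  have hm₁' : m₁ * (|c|+1) ≤ C*ρ/4 := by
    calc m₁ * (|c|+1) ≤ ((C*ρ/4)/(|c|+1)) * (|c|+1) := by
          apply mul_le_mul_of_nonneg_right _ (by positivity)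
          rw [hm₁def]; exact min_le_right _ _
      _ = C*ρ/4 := div_mul_cancel₀ _ (by positivity)
  have hm₂' : Gα * m₂ ≤ C*ρ/4 := by
    calc Gα * m₂ ≤ (Gα+1) * m₂ := by nlinarith [hm₂.le]
      _ ≤ (Gα+1) * ((C*ρ/4)/(Gα+1)) := by
          apply mul_le_mul_of_nonneg_left _ (by positivity)
          rw [hm₂def]; exact min_le_right _ _
      _ = C*ρ/4 := by rw [mul_comm]; exact div_mul_cancel₀ _ (by positivity)
  have hεφK : εφ * K ≤ C*ρ/4 := by
    calc εφ * K ≤ ((C*ρ/4)/K) * K := by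
          apply mul_le_mul_of_nonneg_right _ hK.le
          rw [hεφdef]; exact min_le_right _ _
      _ = C*ρ/4 := div_mul_cancel₀ _ hK.ne'
  clear_value K m₁ m₂ εφ
  -- joint continuity of igφ at (α, y₀)
  obtain ⟨δ, hδ, hball⟩ := Metric.continuousAt_iff.1 hφcont εφ hεφ
  -- eventual facts
  have e0 : ∀ᶠ a in nhds α, 0 < a := eventually_gt_nhds hα
  have e1 : ∀ᶠ a in nhds α, |a - α| < δ := by
    filter_upwards [Metric.ball_mem_nhds α hδ] with a ha
    rwa [Metric.mem_ball, Real.dist_eq] at ha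
  have e2 : ∀ᶠ a in nhds α, |H a x - y₀| < δ := by
    filter_upwards [Metric.tendsto_nhds.1 htd δ hδ] with a ha
    rwa [Real.dist_eq] at ha
  rw [hasDerivAt_iff_isLittleO] at hg0
  have e3 : ∀ᶠ a in nhds α,
      |invGammaCDF a y₀ - x - (a - α) * c| ≤ m₂ * |a - α| := by
    filter_upwards [Asymptotics.isLittleO_iff.1 hg0 hm₂] with a ha
    simp only [Real.norm_eq_abs, smul_eq_mul] at ha
    rwa [hFy₀] at ha
  have e4 : ∀ᶠ a in nhds α, |igG a - Gα| ≤ m₁ := by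
    filter_upwards [Metric.tendsto_nhds.1 hGcont m₁ hm₁] with a ha
    rw [Real.dist_eq] at ha; exact ha.le
  filter_upwards [e0, e1, e2, e3, e4] with a h0a hda hta hga hGa
  obtain ⟨hHa0, hFa⟩ := hH a h0a x hx
  simp only [Real.norm_eq_abs, smul_eq_mul]
  rw [← hy₀def]
  set r := H a x - y₀ with hrdef
  set g := invGammaCDF a y₀ - x with hgdef
  set E := (∫ z in y₀..(H a x), igφ a z) - ρ * r with hEdef
  clear_value r g E
  have hga' : |g - (a-α)*c| ≤ m₂ * |a-α| := hga
  -- key identities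
  have hΦH : igΦ a (H a x) = igG a * x := by
    have h1 := CDF_eq h0a (H a x)
    rw [hFa, eq_div_iff (igG_pos h0a).ne'] at h1
    linear_combination -h1
  have hΦy₀ : igΦ a y₀ = igG a * (g + x) := by
    have h2 := CDF_eq h0a y₀
    rw [eq_div_iff (igG_pos h0a).ne'] at h2
    linear_combination -h2 - igG a * hgdef
  have hint : igΦ a (H a x) - igΦ a y₀ = ∫ z in y₀..(H a x), igφ a z :=
    igΦ_sub_eq hHa0 hy₀
  have hkey : ρ * r + E = -(igG a * g) := by
    linear_combination hEdef - hint + hΦH - hΦy₀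
  -- bound on E
  have hEabs : |E| ≤ εφ * |r| := by
    have hconst : (∫ _ in y₀..(H a x), (ρ : ℝ)) = (H a x - y₀) * ρ := by
      rw [intervalIntegral.integral_const, smul_eq_mul]
    have hii : IntervalIntegrable (igφ a) volume y₀ (H a x) :=
      igφ_intervalIntegrable hy₀ hHa0
    have hE2 : E = ∫ z in y₀..(H a x), (igφ a z - ρ) := by
      rw [intervalIntegral.integral_sub hii intervalIntegrable_const, hconst]
      linear_combination hEdef - ρ * hrdef
    rw [hE2]
    have hb := intervalIntegral.norm_integral_le_of_norm_le_const
      (C := εφ) (f := fun z => igφ a z - ρ) (a := y₀) (b := H a x) ?_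
    · rw [Real.norm_eq_abs] at hb
      calc |∫ z in y₀..(H a x), (igφ a z - ρ)| ≤ εφ * |H a x - y₀| := hb
        _ = εφ * |r| := by rw [hrdef]
    · intro z hz
      have hzy : |z - y₀| ≤ |H a x - y₀| := by
        rcases le_total y₀ (H a x) with h | h
        · rw [Set.uIoc_of_le h] at hz
          rw [abs_of_nonneg (by linarith [hz.1.le] : (0:ℝ) ≤ z - y₀),
            abs_of_nonneg (by linarith : (0:ℝ) ≤ H a x - y₀)]
          linarith [hz.2]
        · rw [Set.uIoc_of_ge h] at hz
          rw [abs_of_nonpos (by linarith [hz.2] : z - y₀ ≤ 0),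
            abs_of_nonpos (by linarith : H a x - y₀ ≤ 0)]
          linarith [hz.1.le]
      have hdist : dist (a, z) (α, y₀) < δ := by
        rw [Prod.dist_eq]
        apply max_lt
        · rwa [Real.dist_eq]
        · rw [Real.dist_eq]; exact lt_of_le_of_lt hzy (hrdef ▸ hta)
      have h5 : |igφ a z - igφ α y₀| < εφ := by
        simpa [Real.dist_eq] using hball hdist
      rw [Real.norm_eq_abs, hρdef]
      exact h5.le
  -- bound on |g|
  have hgabs : |g| ≤ (|c|+1) * |a - α| := by
    calc |g| = |(g - (a-α)*c) + (a-α)*c| := by congr 1; ring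
      _ ≤ |g - (a-α)*c| + |(a-α)*c| := abs_add_le _ _
      _ ≤ m₂ * |a-α| + |a-α| * |c| := add_le_add hga' (le_of_eq (abs_mul _ _))
      _ ≤ (|c|+1) * |a - α| := by nlinarith [abs_nonneg (a-α), abs_nonneg c]
  have hGabs : |igG a| ≤ Gα + 1 := by
    have h1 : igG a = Gα + (igG a - Gα) := by ring
    rw [h1]
    refine (abs_add_le _ _).trans ?_
    rw [abs_of_pos hGα]
    linarith [hGa, hm₁1]
  -- bound on |r|
  have h1 : |ρ * r| ≤ |igG a| * |g| + |E| := by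
    rw [show ρ * r = -(igG a * g) - E by linarith [hkey]]
    rw [sub_eq_add_neg]
    refine (abs_add_le _ _).trans ?_
    rw [abs_neg, abs_neg, abs_mul]
  have h_half : (ρ/2) * |r| ≤ (Gα+1) * ((|c|+1) * |a-α|) := by
    have hprod : |igG a| * |g| ≤ (Gα+1) * ((|c|+1) * |a-α|) :=
      mul_le_mul hGabs hgabs (abs_nonneg g) (by positivity)
    have hEr : |E| ≤ (ρ/2) * |r| :=
      hEabs.trans (mul_le_mul_of_nonneg_right hεφρ (abs_nonneg r))
    have hρr : |ρ * r| = ρ * |r| := by rw [abs_mul, abs_of_pos hρ]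
    rw [hρr] at h1
    linarith
  have hrK : |r| ≤ K * |a-α| := by
    have h2 := mul_le_mul_of_nonneg_left h_half (by positivity : (0:ℝ) ≤ 2/ρ)
    calc |r| = (2/ρ) * ((ρ/2) * |r|) := by field_simp
      _ ≤ (2/ρ) * ((Gα+1) * ((|c|+1) * |a-α|)) := h2
      _ = K * |a-α| := by rw [hKdef]; ring
  -- final assembly
  have hρDy : ρ * Dy = -(Gα * c) := by rw [hDydef]; field_simp
  have hfinal_eq : ρ * (r - (a-α)*Dy) = -((igG a - Gα)*g + Gα*(g - (a-α)*c)) - E := by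
    have expand : ρ * (r - (a-α)*Dy) = ρ*r - (a-α)*(ρ*Dy) := by ring
    rw [expand, hρDy]
    linear_combination hkey
  have habs : |ρ * (r - (a-α)*Dy)| ≤ |igG a - Gα| * |g| + Gα * |g - (a-α)*c| + |E| := by
    rw [hfinal_eq, sub_eq_add_neg]
    refine (abs_add_le _ _).trans ?_
    rw [abs_neg, abs_neg]
    refine add_le_add ((abs_add_le _ _).trans ?_) le_rfl
    apply add_le_add
    · rw [abs_mul]
    · rw [abs_mul, abs_of_pos hGα]
  have b1 : |igG a - Gα| * |g| ≤ m₁ * ((|c|+1) * |a-α|) :=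
    mul_le_mul hGa hgabs (abs_nonneg g) hm₁.le
  have b1' : m₁ * ((|c|+1) * |a-α|) ≤ (C*ρ/4) * |a-α| := by
    calc m₁ * ((|c|+1) * |a-α|) = (m₁ * (|c|+1)) * |a-α| := by ring
      _ ≤ (C*ρ/4) * |a-α| := mul_le_mul_of_nonneg_right hm₁' (abs_nonneg _)
  have b2 : Gα * |g - (a-α)*c| ≤ Gα * (m₂ * |a-α|) :=
    mul_le_mul_of_nonneg_left hga' hGα.le
  have b2' : Gα * (m₂ * |a-α|) ≤ (C*ρ/4) * |a-α| := by
    calc Gα * (m₂ * |a-α|) = (Gα * m₂) * |a-α| := by ring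
      _ ≤ (C*ρ/4) * |a-α| := mul_le_mul_of_nonneg_right hm₂' (abs_nonneg _)
  have b3 : |E| ≤ (C*ρ/4) * |a-α| := by
    calc |E| ≤ εφ * |r| := hEabs
      _ ≤ εφ * (K * |a-α|) := mul_le_mul_of_nonneg_left hrK hεφ.le
      _ = (εφ * K) * |a-α| := by ring
      _ ≤ (C*ρ/4) * |a-α| := mul_le_mul_of_nonneg_right hεφK (abs_nonneg _)
  have habs' : |ρ * (r - (a-α)*Dy)| = ρ * |r - (a-α)*Dy| := by
    rw [abs_mul, abs_of_pos hρ]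
  have hsum : (C*ρ/4) * |a-α| + (C*ρ/4) * |a-α| + (C*ρ/4) * |a-α| ≤ ρ * (C * |a-α|) := by
    have h34 : 3*(C*ρ/4) ≤ ρ * C := by linarith [mul_pos hC hρ]
    calc (C*ρ/4) * |a-α| + (C*ρ/4) * |a-α| + (C*ρ/4) * |a-α|
        = (3*(C*ρ/4)) * |a-α| := by ring
      _ ≤ (ρ * C) * |a-α| := mul_le_mul_of_nonneg_right h34 (abs_nonneg _)
      _ = ρ * (C * |a-α|) := by ring
  have final1 : ρ * |r - (a-α)*Dy| ≤ ρ * (C * |a-α|) := by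
    rw [← habs']
    linarith [habs, b1, b1', b2, b2', b3, hsum]
  exact le_of_mul_le_mul_left final1 hρ

end main

/-- The inverse-gamma quantile function `H(α; ·)` is strictly decreasing in the shape
parameter: `∂_α log H(α;x) = -(1/(y ρ_α(y))) Cov(-log X, 1[X ≤ y])` with
`y = H(α;x)`, and for each fixed `x ∈ (0,1)`, `α ↦ H(α;x)` is strictly decreasing. -/
theorem invGamma_quantile_strictAnti_in_shape
    (H : ℝ → ℝ → ℝ)
    (hH : ∀ a : ℝ, 0 < a → ∀ x ∈ Set.Ioo (0 : ℝ) 1,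
      0 < H a x ∧ invGammaCDF a (H a x) = x)
    (α : ℝ) (hα : 0 < α) (x : ℝ) (hx : x ∈ Set.Ioo (0 : ℝ) 1) :
    (HasDerivAt (fun a => Real.log (H a x))
        (-(1 / (H α x * invGammaPDF α (H α x))) * invGammaCov α (H α x)) α
      ∧ -(1 / (H α x * invGammaPDF α (H α x))) * invGammaCov α (H α x) < 0)
    ∧ ∀ a b : ℝ, 0 < a → a < b → H b x < H a x := by
  obtain ⟨hy₀, hFy₀⟩ := hH α hα x hx
  have hρ : 0 < igφ α (H α x) := igφ_pos hy₀
  have hG : 0 < igG α := igG_pos hα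
  have hpdf : invGammaPDF α (H α x) = igφ α (H α x) / igG α := by
    rw [pdf_eq, igG_eq_Gamma hα]
  have hpdfpos : 0 < invGammaPDF α (H α x) := by rw [hpdf]; positivity
  have hc : 0 < invGammaCov α (H α x) := cov_pos hα hy₀
  refine ⟨⟨?_, ?_⟩, ?_⟩
  · have hd := (hasDerivAt_H hH hα hx).log hy₀.ne'
    convert hd using 1
    rw [hpdf]
    field_simp
  · have hpos : 0 < 1 / (H α x * invGammaPDF α (H α x)) * invGammaCov α (H α x) := by
      positivity
    linarith [hpos]
  · intro a b ha hab
    have hb : 0 < b := lt_trans ha hab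
    obtain ⟨hya, hFa⟩ := hH a ha x hx
    obtain ⟨hyb, hFb⟩ := hH b hb x hx
    have hsm : StrictMonoOn (fun s => invGammaCDF s (H a x)) (Icc a b) := by
      apply strictMonoOn_of_deriv_pos (convex_Icc a b)
      · intro s hs
        exact ((hasDerivAt_CDF (lt_of_lt_of_le ha hs.1) (H a x)).continuousAt).continuousWithinAt
      · intro s hs
        rw [interior_Icc] at hs
        rw [(hasDerivAt_CDF (lt_trans ha hs.1) (H a x)).deriv]
        exact cov_pos (lt_trans ha hs.1) hya
    have hkey : x < invGammaCDF b (H a x) := by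
      have := hsm (Set.left_mem_Icc.2 hab.le) (Set.right_mem_Icc.2 hab.le) hab
      simpa [hFa] using this
    by_contra hcon
    push_neg at hcon
    have h2 := CDF_mono hb hcon
    rw [hFb] at h2
    linarith
end

section
/- Let α > 0, t = t̃/(σN)^{1/3} with t̃ > 0 fixed and σ = -ψ''(α) > 0. Let X₁,...,X_N be i.i.d. Gamma⁻¹(α+t) and Y₂,...,Y_N be i.i.d. Gamma⁻¹(α-t), all independent. Set W₁ = log X₁, W_i = log X_i - log Y_i for 2 ≤ i ≤ N, and S_k = Σ_{i=1}^k W_i. Then there exist a constant C > 0 and N₀ ∈ ℕ such that for all N ≥ N₀ and all a > 0, P(max_{1≤k≤N} S_k > a(σN)^{1/3}) ≤ C·e^{-2t̃·a}. -/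
open MeasureTheory ProbabilityTheory Real Finset
open scoped ENNReal

/-- The digamma function `ψ = (log Γ)'`. -/
noncomputable def digamma (x : ℝ) : ℝ :=
  deriv (fun y => Real.log (Real.Gamma y)) x

/-- The inverse-gamma distribution with shape parameter `a`. -/
noncomputable def invGammaMeasure (a : ℝ) : Measure ℝ :=
  (volume.restrict (Set.Ioi (0 : ℝ))).withDensity
    (fun y => ENNReal.ofReal (y ^ (-a - 1) * Real.exp (-y⁻¹) / Real.Gamma a))

namespace RWaux

lemma invGamma_core (s : ℝ) (hs : 0 < s) :
    IntegrableOn (fun x : ℝ => x ^ (-s - 1) * Real.exp (-x⁻¹)) (Set.Ioi 0) ∧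
    ∫ x in Set.Ioi 0, x ^ (-s - 1) * Real.exp (-x⁻¹) = Real.Gamma s := by
  set g : ℝ → ℝ := fun x => Real.exp (-x) * x ^ (s - 1) with hg
  have hkey : ∀ x : ℝ, x ∈ Set.Ioi (0:ℝ) →
      (|(-1:ℝ)| * x ^ ((-1:ℝ) - 1)) • g (x ^ (-1:ℝ)) = x ^ (-s - 1) * Real.exp (-x⁻¹) := by
    intro x hx
    have hx0 : (0:ℝ) < x := hx
    rw [Real.rpow_neg_one x]
    simp only [hg, abs_neg, abs_one, one_mul, smul_eq_mul]
    rw [Real.inv_rpow hx0.le, ← Real.rpow_neg hx0.le]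
    rw [show ((-1:ℝ) - 1) = (-2 : ℝ) by ring]
    rw [← mul_assoc, mul_comm (x ^ (-2:ℝ)) (Real.exp (-x⁻¹)), mul_assoc,
      ← Real.rpow_add hx0]
    ring_nf
  constructor
  · have h1 : IntegrableOn (fun x : ℝ => (|(-1:ℝ)| * x ^ ((-1:ℝ) - 1)) • g (x ^ (-1:ℝ)))
        (Set.Ioi 0) := by
      rw [integrableOn_Ioi_comp_rpow_iff g (by norm_num : (-1:ℝ) ≠ 0)]
      exact Real.GammaIntegral_convergent hs
    exact h1.congr_fun hkey measurableSet_Ioi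
  · calc ∫ x in Set.Ioi (0:ℝ), x ^ (-s - 1) * Real.exp (-x⁻¹)
        = ∫ x in Set.Ioi (0:ℝ), (|(-1:ℝ)| * x ^ ((-1:ℝ) - 1)) • g (x ^ (-1:ℝ)) :=
          (setIntegral_congr_fun measurableSet_Ioi hkey).symm
      _ = ∫ y in Set.Ioi (0:ℝ), g y := integral_comp_rpow_Ioi g (by norm_num : (-1:ℝ) ≠ 0)
      _ = Real.Gamma s := (Real.Gamma_eq_integral hs).symm

lemma invGamma_lintegral (β lam : ℝ) (hβ : 0 < β) (h : lam < β) :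
    ∫⁻ x, ENNReal.ofReal (Real.exp (lam * Real.log x)) ∂(invGammaMeasure β)
      = ENNReal.ofReal (Real.Gamma (β - lam) / Real.Gamma β) := by
  obtain ⟨hint, hval⟩ := invGamma_core (β - lam) (by linarith)
  have hΓβ : 0 < Real.Gamma β := Real.Gamma_pos_of_pos hβ
  have hdmeas : Measurable (fun y : ℝ =>
      ENNReal.ofReal (y ^ (-β - 1) * Real.exp (-y⁻¹) / Real.Gamma β)) := by
    have m1 : Measurable fun y : ℝ => y ^ (-β - 1) := by measurability
    have m2 : Measurable fun y : ℝ => Real.exp (-y⁻¹) := (measurable_inv.neg).exp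
    exact ((m1.mul m2).div_const _).ennreal_ofReal
  have hfmeas : Measurable (fun x : ℝ => ENNReal.ofReal (Real.exp (lam * Real.log x))) := by
    measurability
  rw [invGammaMeasure, lintegral_withDensity_eq_lintegral_mul _ hdmeas hfmeas]
  have hcong : ∀ y ∈ Set.Ioi (0:ℝ),
      (fun y => ENNReal.ofReal (y ^ (-β - 1) * Real.exp (-y⁻¹) / Real.Gamma β) *
        ENNReal.ofReal (Real.exp (lam * Real.log y))) y
      = ENNReal.ofReal ((y ^ (-(β - lam) - 1) * Real.exp (-y⁻¹)) / Real.Gamma β) := by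
    intro y hy
    have hy0 : (0:ℝ) < y := hy
    dsimp only
    rw [← ENNReal.ofReal_mul (div_nonneg (mul_nonneg (Real.rpow_nonneg hy0.le _) (Real.exp_nonneg _)) (Real.Gamma_pos_of_pos hβ).le)]
    congr 1
    have hexp : Real.exp (lam * Real.log y) = y ^ lam := by
      rw [Real.rpow_def_of_pos hy0, mul_comm]
    rw [hexp]
    rw [div_mul_eq_mul_div, mul_assoc, mul_comm (Real.exp (-y⁻¹)) (y ^ lam), ← mul_assoc,
      ← Real.rpow_add hy0]
    ring_nf
  calc ∫⁻ y, (fun y => ENNReal.ofReal (y ^ (-β - 1) * Real.exp (-y⁻¹) / Real.Gamma β) *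
        ENNReal.ofReal (Real.exp (lam * Real.log y))) y ∂(volume.restrict (Set.Ioi 0))
      = ∫⁻ y in Set.Ioi (0:ℝ),
          ENNReal.ofReal ((y ^ (-(β - lam) - 1) * Real.exp (-y⁻¹)) / Real.Gamma β) ∂volume := by
        exact setLIntegral_congr_fun measurableSet_Ioi hcong
    _ = ENNReal.ofReal (∫ y in Set.Ioi (0:ℝ), (y ^ (-(β - lam) - 1) * Real.exp (-y⁻¹)) / Real.Gamma β) := by
        rw [← ofReal_integral_eq_lintegral_ofReal (hint.div_const _)]
        exact (ae_restrict_iff' measurableSet_Ioi).2 (Filter.Eventually.of_forall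
          (fun y hy => div_nonneg (mul_nonneg (Real.rpow_nonneg (le_of_lt hy) _)
            (Real.exp_nonneg _)) (Real.Gamma_pos_of_pos hβ).le))
    _ = ENNReal.ofReal (Real.Gamma (β - lam) / Real.Gamma β) := by
        rw [integral_div, hval]

lemma moment (β lam : ℝ) (hβ : 0 < β) (h : lam < β)
    {Ω : Type} [MeasurableSpace Ω] {μ : Measure Ω} {V : Ω → ℝ} (hV : Measurable V)
    (hmap : Measure.map V μ = invGammaMeasure β) :
    ∫⁻ ω, ENNReal.ofReal (Real.exp (lam * Real.log (V ω))) ∂μ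
      = ENNReal.ofReal (Real.Gamma (β - lam) / Real.Gamma β) := by
  rw [← invGamma_lintegral β lam hβ h, ← hmap,
    lintegral_map (by measurability) hV]

end RWaux

/-- Random walk estimate: with `t = t̃/(σN)^{1/3}`, `X_i ~ Gamma⁻¹(α+t)`,
`Y_i ~ Gamma⁻¹(α-t)` all independent, `S_k = log X₁ + Σ_{i=2}^k (log X_i - log Y_i)`,
there are `C > 0` and `N₀` with
`P(max_{1≤k≤N} S_k > a (σN)^{1/3}) ≤ C e^{-2 t̃ a}` for all `N ≥ N₀` and `a > 0`. -/
theorem randomWalk_max_exponential_bound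
    (α t' : ℝ) (hα : 0 < α) (ht' : 0 < t')
    (σ : ℝ) (hσdef : σ = -(iteratedDeriv 2 digamma α)) (hσ : 0 < σ) :
    ∃ C > (0 : ℝ), ∃ N₀ : ℕ, ∀ N : ℕ, N₀ ≤ N →
      ∀ (Ω : Type) (_ : MeasurableSpace Ω) (μ : Measure Ω) (_ : IsProbabilityMeasure μ)
        (X Y : ℕ → Ω → ℝ),
        (∀ i, Measurable (X i)) → (∀ i, Measurable (Y i)) →
        iIndepFun
          (fun p : ℕ × Bool => if p.2 then X p.1 else Y p.1) μ →
        (∀ i, Measure.map (X i) μ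
            = invGammaMeasure (α + t' / (σ * N) ^ ((1 : ℝ) / 3))) →
        (∀ i, Measure.map (Y i) μ
            = invGammaMeasure (α - t' / (σ * N) ^ ((1 : ℝ) / 3))) →
        ∀ a : ℝ, 0 < a →
          (μ {ω | ∃ k, 1 ≤ k ∧ k ≤ N ∧
              a * (σ * N) ^ ((1 : ℝ) / 3) <
                Real.log (X 1 ω)
                  + ∑ i ∈ Finset.Icc 2 k, (Real.log (X i ω) - Real.log (Y i ω))}).toReal
            ≤ C * Real.exp (-2 * t' * a) := by
  classical
  -- continuity of the Gamma ratio and choice of C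
  have hΓc : ∀ x : ℝ, 0 < x → ContinuousAt Real.Gamma x := by
    intro x hx
    refine (Real.differentiableAt_Gamma fun m => ?_).continuousAt
    have h1 : -(m:ℝ) ≤ 0 := neg_nonpos_of_nonneg (Nat.cast_nonneg m)
    exact ne_of_gt (lt_of_le_of_lt h1 hx)
  set g : ℝ → ℝ := fun s => Real.Gamma (α - s) / Real.Gamma (α + s) with hgdef
  have hgc : ContinuousOn g (Set.Icc 0 (α/2)) := by
    intro s hs
    have h1 : 0 < α - s := by have := hs.2; linarith
    have h2 : 0 < α + s := by have := hs.1; linarith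
    have c1 : ContinuousAt (fun s : ℝ => Real.Gamma (α - s)) s :=
      (hΓc _ h1).comp ((continuous_const.sub continuous_id).continuousAt)
    have c2 : ContinuousAt (fun s : ℝ => Real.Gamma (α + s)) s :=
      (hΓc _ h2).comp ((continuous_const.add continuous_id).continuousAt)
    exact ((c1.div c2 (ne_of_gt (Real.Gamma_pos_of_pos h2)))).continuousWithinAt
  obtain ⟨s₀, hs₀mem, hs₀max'⟩ :=
    isCompact_Icc.exists_isMaxOn ⟨0, Set.left_mem_Icc.2 (by linarith)⟩ hgc
  have hs₀max : ∀ s ∈ Set.Icc 0 (α/2), g s ≤ g s₀ := fun s hs => hs₀max' hs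
  refine ⟨max 1 (g s₀), lt_of_lt_of_le zero_lt_one (le_max_left _ _),
    ⌈(2 * t' / α) ^ 3 / σ⌉₊ + 1, ?_⟩
  intro N hN Ω mΩ μ hμ X Y hXm hYm hind hmX hmY a ha
  have hN1 : 1 ≤ N := le_trans (Nat.le_add_left 1 _) hN
  have hNpos : (0:ℝ) < N := by exact_mod_cast Nat.lt_of_lt_of_le Nat.zero_lt_one hN1
  have hσN : 0 < σ * N := mul_pos hσ hNpos
  set r := (σ * (N:ℝ)) ^ ((1:ℝ)/3) with hrdef
  have hr : 0 < r := Real.rpow_pos_of_pos hσN _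
  have hx0 : (2*t'/α)^3 / σ ≤ (N:ℝ) := by
    calc (2*t'/α)^3 / σ ≤ (⌈(2 * t' / α) ^ 3 / σ⌉₊ : ℝ) := Nat.le_ceil _
    _ ≤ (N:ℝ) := by exact_mod_cast le_trans (Nat.le_add_right _ 1) hN
  have hσN3 : (2*t'/α)^3 ≤ σ * N := by
    have := (div_le_iff₀ hσ).1 hx0
    linarith [this]
  have hr2 : 2*t'/α ≤ r := by
    have h1 : ((2*t'/α)^3 : ℝ) ^ ((1:ℝ)/3) = 2*t'/α := by
      rw [← Real.rpow_natCast (2*t'/α) 3, ← Real.rpow_mul (by positivity)]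
      norm_num
    calc 2*t'/α = ((2*t'/α)^3) ^ ((1:ℝ)/3) := h1.symm
    _ ≤ r := Real.rpow_le_rpow (by positivity) hσN3 (by norm_num)
  set t := t' / r with htdef
  have ht : 0 < t := div_pos ht' hr
  have ht2 : t ≤ α/2 := by
    have h2a : 0 < 2*t'/α := by positivity
    have : t' / r ≤ t' / (2*t'/α) := div_le_div_of_nonneg_left ht'.le h2a hr2
    calc t = t' / r := rfl
    _ ≤ t' / (2*t'/α) := this
    _ = α/2 := by field_simp
  have hαt : 0 < α - t := by linarith
  have hαt2 : 0 < α + t := by linarith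
  set lam := 2*t with hlamdef
  have hlam : 0 < lam := by positivity
  have hΓ1 : 0 < Real.Gamma (α - t) := Real.Gamma_pos_of_pos hαt
  have hΓ2 : 0 < Real.Gamma (α + t) := Real.Gamma_pos_of_pos hαt2
  -- moments
  have hmom1 : ∀ i, ∫⁻ ω, ENNReal.ofReal (Real.exp (lam * Real.log (X i ω))) ∂μ
      = ENNReal.ofReal (Real.Gamma (α - t) / Real.Gamma (α + t)) := by
    intro i
    have h := RWaux.moment (α + t) lam hαt2 (by simp only [hlamdef]; linarith)
      (hXm i) (hmX i)
    rw [show α + t - lam = α - t by simp only [hlamdef]; ring] at h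
    exact h
  have hmom2 : ∀ i, ∫⁻ ω, ENNReal.ofReal (Real.exp (-lam * Real.log (Y i ω))) ∂μ
      = ENNReal.ofReal (Real.Gamma (α + t) / Real.Gamma (α - t)) := by
    intro i
    have h := RWaux.moment (α - t) (-lam) hαt (by simp only [hlamdef]; linarith)
      (hYm i) (hmY i)
    rw [show α - t - -lam = α + t by simp only [hlamdef]; ring] at h
    exact h
  -- sigma-algebra machinery
  set f : ℕ × Bool → Ω → ℝ := fun p => if p.2 then X p.1 else Y p.1 with hfdef
  have hfm : ∀ p, Measurable (f p) := by
    rintro ⟨i, b⟩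
    cases b
    · simpa [hfdef] using hYm i
    · simpa [hfdef] using hXm i
  set m : ℕ × Bool → MeasurableSpace Ω :=
    fun p => MeasurableSpace.comap (f p) inferInstance with hmdef
  have hm_le : ∀ p, m p ≤ mΩ := fun p => (hfm p).comap_le
  have hiI : iIndep m μ := hind.iIndep
  set MS : Set ℕ → MeasurableSpace Ω :=
    fun I => ⨆ (p : ℕ × Bool) (_ : p.1 ∈ I), m p with hMSdef
  have hmle : ∀ (p : ℕ × Bool) (I : Set ℕ), p.1 ∈ I → m p ≤ MS I := by
    intro p I hp
    rw [hMSdef]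
    exact le_iSup₂ (f := fun (p : ℕ × Bool) (_ : p.1 ∈ I) => m p) p hp
  have hMS_le : ∀ I, MS I ≤ mΩ := by
    intro I
    rw [hMSdef]
    exact iSup₂_le fun p _ => hm_le p
  have hMSindep : ∀ I J : Set ℕ, Disjoint I J → Indep (MS I) (MS J) μ := by
    intro I J hIJ
    have hdisj : Disjoint {p : ℕ × Bool | p.1 ∈ I} {p : ℕ × Bool | p.1 ∈ J} := by
      rw [Set.disjoint_left]
      intro p hpI hpJ
      exact Set.disjoint_left.1 hIJ hpI hpJ
    exact indep_iSup_of_disjoint hm_le hiI hdisj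
  have hXmeas : ∀ (i : ℕ) (I : Set ℕ), i ∈ I → Measurable[MS I] (X i) := by
    intro i I hi
    have h1 : Measurable[m (i, true)] (f (i, true)) := Measurable.of_comap_le le_rfl
    have h2 : f (i, true) = X i := by simp [hfdef]
    rw [h2] at h1
    exact h1.mono (hmle (i, true) I hi) le_rfl
  have hYmeas : ∀ (i : ℕ) (I : Set ℕ), i ∈ I → Measurable[MS I] (Y i) := by
    intro i I hi
    have h1 : Measurable[m (i, false)] (f (i, false)) := Measurable.of_comap_le le_rfl
    have h2 : f (i, false) = Y i := by simp [hfdef]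
    rw [h2] at h1
    exact h1.mono (hmle (i, false) I hi) le_rfl
  -- the walk
  set W : ℕ → Ω → ℝ := fun i ω =>
    if i = 1 then Real.log (X 1 ω) else Real.log (X i ω) - Real.log (Y i ω) with hWdef
  set S : ℕ → Ω → ℝ := fun k ω => ∑ i ∈ Finset.Ioc 0 k, W i ω with hSdef
  set Z : ℕ → Ω → ℝ≥0∞ := fun i ω => ENNReal.ofReal (Real.exp (lam * W i ω)) with hZdef
  have hWmeas : ∀ (i : ℕ) (I : Set ℕ), i ∈ I → Measurable[MS I] (W i) := by
    intro i I hi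
    by_cases h1 : i = 1
    · subst h1
      simpa [hWdef, Function.comp_def] using Real.measurable_log.comp (hXmeas 1 I hi)
    · have := (Real.measurable_log.comp (hXmeas i I hi)).sub
        (Real.measurable_log.comp (hYmeas i I hi))
      rw [hWdef]; simp only [if_neg h1]; exact this
  have hSmeas : ∀ (k : ℕ) (I : Set ℕ), Set.Icc 1 k ⊆ I → Measurable[MS I] (S k) := by
    intro k I hsub
    rw [hSdef]
    exact Finset.measurable_sum _ fun i hi => hWmeas i I
      (hsub ⟨(Finset.mem_Ioc.1 hi).1, (Finset.mem_Ioc.1 hi).2⟩)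
  have hZmeas : ∀ (i : ℕ) (I : Set ℕ), i ∈ I → Measurable[MS I] (Z i) := by
    intro i I hi
    rw [hZdef]
    exact (((hWmeas i I hi).const_mul lam).exp).ennreal_ofReal
  have hZglob : ∀ i, Measurable (Z i) :=
    fun i => (hZmeas i Set.univ trivial).mono (hMS_le _) le_rfl
  -- individual moments of Z
  have hZ1int : ∫⁻ ω, Z 1 ω ∂μ = ENNReal.ofReal (Real.Gamma (α - t) / Real.Gamma (α + t)) := by
    rw [← hmom1 1]
    apply lintegral_congr
    intro ω
    simp [hZdef, hWdef]
  have hZint : ∀ i, 2 ≤ i → ∫⁻ ω, Z i ω ∂μ = 1 := by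
    intro i hi
    have hne : i ≠ 1 := by omega
    have heq : ∀ ω, Z i ω = ENNReal.ofReal (Real.exp (lam * Real.log (X i ω))) *
        ENNReal.ofReal (Real.exp (-lam * Real.log (Y i ω))) := by
      intro ω
      rw [hZdef]
      simp only [hWdef, if_neg hne]
      rw [← ENNReal.ofReal_mul (Real.exp_nonneg _), ← Real.exp_add]
      ring_nf
    have hind2 : Indep (m (i, true)) (m (i, false)) μ := hiI.indep (by simp)
    have hb1 : Measurable[m (i, true)] (X i) := by
      have h1 : Measurable[m (i, true)] (f (i, true)) := Measurable.of_comap_le le_rfl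
      have h2 : f (i, true) = X i := by simp [hfdef]
      rwa [h2] at h1
    have hb2 : Measurable[m (i, false)] (Y i) := by
      have h1 : Measurable[m (i, false)] (f (i, false)) := Measurable.of_comap_le le_rfl
      have h2 : f (i, false) = Y i := by simp [hfdef]
      rwa [h2] at h1
    have hf1 : Measurable[m (i, true)]
        (fun ω => ENNReal.ofReal (Real.exp (lam * Real.log (X i ω)))) :=
      (((Real.measurable_log.comp hb1).const_mul lam).exp).ennreal_ofReal
    have hf2 : Measurable[m (i, false)]
        (fun ω => ENNReal.ofReal (Real.exp (-lam * Real.log (Y i ω)))) :=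
      (((Real.measurable_log.comp hb2).const_mul (-lam)).exp).ennreal_ofReal
    calc ∫⁻ ω, Z i ω ∂μ
        = ∫⁻ ω, (fun ω => ENNReal.ofReal (Real.exp (lam * Real.log (X i ω)))) ω *
            (fun ω => ENNReal.ofReal (Real.exp (-lam * Real.log (Y i ω)))) ω ∂μ :=
          lintegral_congr heq
      _ = (∫⁻ ω, ENNReal.ofReal (Real.exp (lam * Real.log (X i ω))) ∂μ) *
            ∫⁻ ω, ENNReal.ofReal (Real.exp (-lam * Real.log (Y i ω))) ∂μ :=
          lintegral_mul_eq_lintegral_mul_lintegral_of_independent_measurableSpace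
            (hm_le _) (hm_le _) hind2 hf1 hf2
      _ = ENNReal.ofReal (Real.Gamma (α - t) / Real.Gamma (α + t)) *
            ENNReal.ofReal (Real.Gamma (α + t) / Real.Gamma (α - t)) := by
          rw [hmom1 i, hmom2 i]
      _ = 1 := by
          rw [← ENNReal.ofReal_mul (by positivity)]
          rw [show Real.Gamma (α - t) / Real.Gamma (α + t) *
              (Real.Gamma (α + t) / Real.Gamma (α - t)) = 1 by
            field_simp]
          simp
  -- factorization over finite products
  have hfact : ∀ s : Finset ℕ, ∫⁻ ω, ∏ i ∈ s, Z i ω ∂μ = ∏ i ∈ s, ∫⁻ ω, Z i ω ∂μ := by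
    intro s
    induction s using Finset.cons_induction with
    | empty => simp
    | cons j s hj ih =>
      have hstep : ∫⁻ ω, (fun ω => Z j ω) ω * (fun ω => ∏ i ∈ s, Z i ω) ω ∂μ =
          (∫⁻ ω, Z j ω ∂μ) * ∫⁻ ω, ∏ i ∈ s, Z i ω ∂μ := by
        apply lintegral_mul_eq_lintegral_mul_lintegral_of_independent_measurableSpace
          (hMS_le {j}) (hMS_le ↑s)
          (hMSindep {j} ↑s (by simpa using hj))
          (hZmeas j {j} rfl)
        exact Finset.measurable_prod _ fun i hi => hZmeas i ↑s hi
      calc ∫⁻ ω, ∏ i ∈ Finset.cons j s hj, Z i ω ∂μ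
          = ∫⁻ ω, (fun ω => Z j ω) ω * (fun ω => ∏ i ∈ s, Z i ω) ω ∂μ := by
            apply lintegral_congr; intro ω; rw [Finset.prod_cons]
        _ = (∫⁻ ω, Z j ω ∂μ) * ∫⁻ ω, ∏ i ∈ s, Z i ω ∂μ := hstep
        _ = ∏ i ∈ Finset.cons j s hj, ∫⁻ ω, Z i ω ∂μ := by rw [Finset.prod_cons, ih]
  -- product = exponential of S
  have hMeq : ∀ (k : ℕ) (ω : Ω), ∏ i ∈ Finset.Ioc 0 k, Z i ω
      = ENNReal.ofReal (Real.exp (lam * S k ω)) := by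
    intro k ω
    rw [hSdef]
    simp only [hZdef]
    rw [Finset.mul_sum, Real.exp_sum, ENNReal.ofReal_prod_of_nonneg
      (fun i _ => Real.exp_nonneg _)]
  -- the statement sum equals S
  have hSeq : ∀ (k : ℕ) (ω : Ω), 1 ≤ k → S k ω =
      Real.log (X 1 ω) + ∑ i ∈ Finset.Icc 2 k, (Real.log (X i ω) - Real.log (Y i ω)) := by
    intro k ω hk
    rw [hSdef]
    have hsplit : (∑ i ∈ Finset.Ioc 0 1, W i ω) + ∑ i ∈ Finset.Ioc 1 k, W i ω
        = ∑ i ∈ Finset.Ioc 0 k, W i ω :=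
      Finset.sum_Ioc_consecutive _ (Nat.zero_le 1) hk
    have h01 : ∑ i ∈ Finset.Ioc 0 1, W i ω = Real.log (X 1 ω) := by
      rw [show Finset.Ioc 0 1 = {1} from rfl, Finset.sum_singleton, hWdef]
      simp
    have h1k : ∑ i ∈ Finset.Ioc 1 k, W i ω
        = ∑ i ∈ Finset.Icc 2 k, (Real.log (X i ω) - Real.log (Y i ω)) := by
      rw [show Finset.Icc 2 k = Finset.Ioc 1 k from rfl]
      apply Finset.sum_congr rfl
      intro i hi
      have : i ≠ 1 := by have := (Finset.mem_Ioc.1 hi).1; omega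
      simp [hWdef, this]
    dsimp only
    rw [← hsplit, h01, h1k]
  -- the stopping sets
  set A : ℕ → Set Ω := fun k =>
    {ω | (∀ j, 1 ≤ j → j < k → S j ω ≤ a * r) ∧ a * r < S k ω} with hAdef
  have hAm : ∀ k, MeasurableSet[MS (Set.Icc 1 k)] (A k) := by
    intro k
    have hrw : A k = (⋂ (j : ℕ), ⋂ (_ : 1 ≤ j), ⋂ (_ : j < k), {ω | S j ω ≤ a * r}) ∩
        {ω | a * r < S k ω} := by
      ext ω
      simp only [hAdef, Set.mem_setOf_eq, Set.mem_inter_iff, Set.mem_iInter]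
    rw [hrw]
    apply MeasurableSet.inter
    · refine MeasurableSet.iInter fun j => MeasurableSet.iInter fun h1 =>
        MeasurableSet.iInter fun h2 => ?_
      exact measurableSet_le (hSmeas j _ (Set.Icc_subset_Icc_right h2.le)) measurable_const
    · exact measurableSet_lt measurable_const (hSmeas k _ subset_rfl)
  have hAmΩ : ∀ k, MeasurableSet (A k) := fun k => hMS_le _ _ (hAm k)
  have hAdisj : ∀ k l : ℕ, 1 ≤ k → k < l → ∀ ω, ω ∈ A l → ω ∉ A k := by
    intro k l hk hkl ω hωl hωk
    exact absurd (hωl.1 k hk hkl) (not_le.mpr hωk.2)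
  set c : ℝ≥0∞ := ENNReal.ofReal (Real.exp (lam * (a * r))) with hcdef
  -- the key per-index inequality
  have step_k : ∀ k, 1 ≤ k → k ≤ N →
      c * μ (A k) ≤ ∫⁻ ω, (A k).indicator (fun ω => ∏ i ∈ Finset.Ioc 0 N, Z i ω) ω ∂μ := by
    intro k hk1 hkN
    have hTint : ∫⁻ ω, ∏ i ∈ Finset.Ioc k N, Z i ω ∂μ = 1 := by
      rw [hfact]
      apply Finset.prod_eq_one
      intro i hi
      exact hZint i (by have := (Finset.mem_Ioc.1 hi).1; omega)
    have hsplit : ∀ ω, (A k).indicator (fun ω => ∏ i ∈ Finset.Ioc 0 k, Z i ω) ω *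
        (∏ i ∈ Finset.Ioc k N, Z i ω) =
        (A k).indicator (fun ω => ∏ i ∈ Finset.Ioc 0 N, Z i ω) ω := by
      intro ω
      by_cases hω : ω ∈ A k
      · rw [Set.indicator_of_mem hω, Set.indicator_of_mem hω,
          Finset.prod_Ioc_consecutive _ (Nat.zero_le k) hkN]
      · rw [Set.indicator_of_notMem hω, Set.indicator_of_notMem hω, zero_mul]
    have hFmeas : Measurable[MS (Set.Icc 1 k)]
        ((A k).indicator (fun ω => ∏ i ∈ Finset.Ioc 0 k, Z i ω)) := by
      apply Measurable.indicator _ (hAm k)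
      exact Finset.measurable_prod _ fun i hi => hZmeas i _
        ⟨(Finset.mem_Ioc.1 hi).1, (Finset.mem_Ioc.1 hi).2⟩
    have hGmeas : Measurable[MS (Set.Ioi k)] (fun ω => ∏ i ∈ Finset.Ioc k N, Z i ω) :=
      Finset.measurable_prod _ fun i hi => hZmeas i _ (Finset.mem_Ioc.1 hi).1
    have hdisj2 : Disjoint (Set.Icc 1 k) (Set.Ioi k) :=
      (Set.Iic_disjoint_Ioi le_rfl).mono_left Set.Icc_subset_Iic_self
    calc c * μ (A k)
        = ∫⁻ ω, (A k).indicator (fun _ => c) ω ∂μ := by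
          rw [lintegral_indicator (hAmΩ k), setLIntegral_const]
      _ ≤ ∫⁻ ω, (A k).indicator (fun ω => ∏ i ∈ Finset.Ioc 0 k, Z i ω) ω ∂μ := by
          apply lintegral_mono
          intro ω
          by_cases hω : ω ∈ A k
          · rw [Set.indicator_of_mem hω, Set.indicator_of_mem hω, hMeq k ω, hcdef]
            apply ENNReal.ofReal_le_ofReal
            apply Real.exp_le_exp.2
            exact mul_le_mul_of_nonneg_left (le_of_lt hω.2) hlam.le
          · rw [Set.indicator_of_notMem hω, Set.indicator_of_notMem hω]
      _ = (∫⁻ ω, (A k).indicator (fun ω => ∏ i ∈ Finset.Ioc 0 k, Z i ω) ω ∂μ) *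
            ∫⁻ ω, ∏ i ∈ Finset.Ioc k N, Z i ω ∂μ := by rw [hTint, mul_one]
      _ = ∫⁻ ω, (A k).indicator (fun ω => ∏ i ∈ Finset.Ioc 0 k, Z i ω) ω *
            (∏ i ∈ Finset.Ioc k N, Z i ω) ∂μ :=
          (lintegral_mul_eq_lintegral_mul_lintegral_of_independent_measurableSpace
            (hMS_le _) (hMS_le _) (hMSindep _ _ hdisj2) hFmeas hGmeas).symm
      _ = ∫⁻ ω, (A k).indicator (fun ω => ∏ i ∈ Finset.Ioc 0 N, Z i ω) ω ∂μ :=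
          lintegral_congr hsplit
  -- summing the indicators
  have hsum : ∑ k ∈ Finset.Icc 1 N,
      ∫⁻ ω, (A k).indicator (fun ω => ∏ i ∈ Finset.Ioc 0 N, Z i ω) ω ∂μ
      ≤ ∫⁻ ω, ∏ i ∈ Finset.Ioc 0 N, Z i ω ∂μ := by
    have hMNmeas : Measurable (fun ω => ∏ i ∈ Finset.Ioc 0 N, Z i ω) :=
      Finset.measurable_prod _ fun i _ => hZglob i
    rw [← lintegral_finset_sum _ (fun k _ => hMNmeas.indicator (hAmΩ k))]
    apply lintegral_mono
    intro ω
    dsimp only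
    by_cases hex : ∃ k₀ ∈ Finset.Icc 1 N, ω ∈ A k₀
    · obtain ⟨k₀, hk₀, hωk₀⟩ := hex
      rw [Finset.sum_eq_single_of_mem k₀ hk₀ ?_]
      · exact Set.indicator_le_self _ _ ω
      · intro j hj hne
        have hωj : ω ∉ A j := by
          rcases hne.lt_or_gt with h | h
          · exact hAdisj j k₀ (Finset.mem_Icc.1 hj).1 h ω hωk₀
          · intro hωj
            exact hAdisj k₀ j (Finset.mem_Icc.1 hk₀).1 h ω hωj hωk₀
        rw [Set.indicator_of_notMem hωj]
    · push_neg at hex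
      rw [Finset.sum_eq_zero fun j hj => by rw [Set.indicator_of_notMem (hex j hj)]]
      exact zero_le
  have hMNint : ∫⁻ ω, ∏ i ∈ Finset.Ioc 0 N, Z i ω ∂μ
      = ENNReal.ofReal (Real.Gamma (α - t) / Real.Gamma (α + t)) := by
    rw [hfact, ← Finset.prod_Ioc_consecutive _ (Nat.zero_le 1) hN1,
      show Finset.Ioc 0 1 = {1} from rfl, Finset.prod_singleton, hZ1int]
    rw [Finset.prod_eq_one fun i hi => hZint i
      (by have := (Finset.mem_Ioc.1 hi).1; omega), mul_one]
  -- the event is contained in the union of the A k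
  set E : Set Ω := {ω | ∃ k, 1 ≤ k ∧ k ≤ N ∧
      a * r < Real.log (X 1 ω)
        + ∑ i ∈ Finset.Icc 2 k, (Real.log (X i ω) - Real.log (Y i ω))} with hEdef
  have hEsub : E ⊆ ⋃ k ∈ Finset.Icc 1 N, A k := by
    intro ω hω
    obtain ⟨k, hk1, hkN, hlt⟩ := hω
    have hlt' : a * r < S k ω := by rw [hSeq k ω hk1]; exact hlt
    have hP : ∃ j, 1 ≤ j ∧ a * r < S j ω := ⟨k, hk1, hlt'⟩
    set k₀ := Nat.find hP with hk₀def
    have hspec := Nat.find_spec hP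
    have hk₀k : k₀ ≤ k := Nat.find_min' hP ⟨hk1, hlt'⟩
    refine Set.mem_biUnion (Finset.mem_Icc.2 ⟨hspec.1, le_trans hk₀k hkN⟩) ?_
    refine ⟨fun j hj1 hjk₀ => ?_, hspec.2⟩
    by_contra hc
    exact Nat.find_min hP hjk₀ ⟨hj1, not_le.1 hc⟩
  -- assembling
  have hmain : c * μ E ≤ ENNReal.ofReal (Real.Gamma (α - t) / Real.Gamma (α + t)) := by
    calc c * μ E ≤ c * ∑ k ∈ Finset.Icc 1 N, μ (A k) := by
          apply mul_le_mul_right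
          exact le_trans (measure_mono hEsub) (measure_biUnion_finset_le _ _)
      _ = ∑ k ∈ Finset.Icc 1 N, c * μ (A k) := Finset.mul_sum _ _ _
      _ ≤ ∑ k ∈ Finset.Icc 1 N,
            ∫⁻ ω, (A k).indicator (fun ω => ∏ i ∈ Finset.Ioc 0 N, Z i ω) ω ∂μ :=
          Finset.sum_le_sum fun k hk =>
            step_k k (Finset.mem_Icc.1 hk).1 (Finset.mem_Icc.1 hk).2
      _ ≤ ∫⁻ ω, ∏ i ∈ Finset.Ioc 0 N, Z i ω ∂μ := hsum
      _ = ENNReal.ofReal (Real.Gamma (α - t) / Real.Gamma (α + t)) := hMNint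
  -- conclude
  have hlar : lam * (a * r) = 2 * t' * a := by
    rw [hlamdef, htdef]
    field_simp
  have hc0 : c ≠ 0 := (ENNReal.ofReal_pos.2 (Real.exp_pos _)).ne'
  have hctop : c ≠ ⊤ := ENNReal.ofReal_ne_top
  have hμE : μ E ≤ ENNReal.ofReal
      (Real.Gamma (α - t) / Real.Gamma (α + t) * Real.exp (-(2 * t' * a))) := by
    have h1 : μ E ≤ ENNReal.ofReal (Real.Gamma (α - t) / Real.Gamma (α + t)) / c :=
      (ENNReal.le_div_iff_mul_le (Or.inl hc0) (Or.inl hctop)).2 (by rwa [mul_comm])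
    refine le_trans h1 (le_of_eq ?_)
    rw [hcdef, hlar, ← ENNReal.ofReal_div_of_pos (Real.exp_pos _)]
    congr 1
    rw [Real.exp_neg, div_eq_mul_inv]
  have hgC : Real.Gamma (α - t) / Real.Gamma (α + t) ≤ max 1 (g s₀) := by
    have : g t ≤ g s₀ := hs₀max t ⟨ht.le, ht2⟩
    calc Real.Gamma (α - t) / Real.Gamma (α + t) = g t := by rw [hgdef]
      _ ≤ g s₀ := this
      _ ≤ max 1 (g s₀) := le_max_right _ _
  calc (μ E).toReal
      ≤ (ENNReal.ofReal (Real.Gamma (α - t) / Real.Gamma (α + t) *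
          Real.exp (-(2 * t' * a)))).toReal := ENNReal.toReal_mono ENNReal.ofReal_ne_top hμE
    _ = Real.Gamma (α - t) / Real.Gamma (α + t) * Real.exp (-(2 * t' * a)) :=
        ENNReal.toReal_ofReal (mul_nonneg (div_nonneg hΓ1.le hΓ2.le) (Real.exp_nonneg _))
    _ ≤ max 1 (g s₀) * Real.exp (-2 * t' * a) := by
        rw [show (-2 : ℝ) * t' * a = -(2 * t' * a) by ring]
        exact mul_le_mul_of_nonneg_right hgC (Real.exp_nonneg _)
end

section
/- Fix α > 0 and d ∈ (0, α). For the function h(z) = log Γ(α+z) - log Γ(α-z) - 2ψ(α)·z, the real part along the vertical line z = -d + iy satisfies d/dy Re h(-d+iy) = Σ_{n=0}^∞ [ -4d(n+α)y / ( ((n+α-d)² + y²)((n+α+d)² + y²) ) ]. In particular, y ↦ Re h(-d+iy) is strictly increasing for y < 0 and strictly decreasing for y > 0, so it attains its maximum at y = 0. -/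
open Complex

open Filter Finset Topology

namespace ReHAux

noncomputable def u (α d : ℝ) (j : ℕ) (y : ℝ) : ℝ :=
  (Real.log (((j : ℝ) + α + d) ^ 2 + y ^ 2) - Real.log (((j : ℝ) + α - d) ^ 2 + y ^ 2)
    - Real.log (((j : ℝ) + α + d) ^ 2) + Real.log (((j : ℝ) + α - d) ^ 2)) / 2

noncomputable def S (α d : ℝ) (j : ℕ) (y : ℝ) : ℝ :=
  -4 * d * ((j : ℝ) + α) * y /
    ((((j : ℝ) + α - d) ^ 2 + y ^ 2) * (((j : ℝ) + α + d) ^ 2 + y ^ 2))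

variable {α d : ℝ}

lemma hb (hd0 : 0 < d) (hdα : d < α) (j : ℕ) : 0 < (j : ℝ) + α - d := by
  have : (0:ℝ) ≤ j := Nat.cast_nonneg j
  linarith

lemma ha (hα : 0 < α) (hd0 : 0 < d) (j : ℕ) : 0 < (j : ℝ) + α + d := by
  have : (0:ℝ) ≤ j := Nat.cast_nonneg j
  linarith

lemma hasDerivAt_u (hα : 0 < α) (hd0 : 0 < d) (hdα : d < α) (j : ℕ) (y : ℝ) :
    HasDerivAt (u α d j) (S α d j y) y := by
  have hbj := hb hd0 hdα j
  have haj := ha hα hd0 j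
  have hA : 0 < ((j : ℝ) + α + d) ^ 2 + y ^ 2 := by positivity
  have hB : 0 < ((j : ℝ) + α - d) ^ 2 + y ^ 2 := by positivity
  have hsq : HasDerivAt (fun y : ℝ => y ^ 2) (2 * y) y := by
    simpa using hasDerivAt_pow 2 y
  have h1 : HasDerivAt (fun y : ℝ => ((j : ℝ) + α + d) ^ 2 + y ^ 2) (2 * y) y :=
    hsq.const_add _
  have h2 : HasDerivAt (fun y : ℝ => ((j : ℝ) + α - d) ^ 2 + y ^ 2) (2 * y) y :=
    hsq.const_add _
  have hl1 : HasDerivAt (fun y : ℝ => Real.log (((j : ℝ) + α + d) ^ 2 + y ^ 2))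
      ((((j : ℝ) + α + d) ^ 2 + y ^ 2)⁻¹ * (2 * y)) y :=
    by have := (Real.hasDerivAt_log hA.ne').comp y h1; exact this
  have hl2 : HasDerivAt (fun y : ℝ => Real.log (((j : ℝ) + α - d) ^ 2 + y ^ 2))
      ((((j : ℝ) + α - d) ^ 2 + y ^ 2)⁻¹ * (2 * y)) y :=
    by have := (Real.hasDerivAt_log hB.ne').comp y h2; exact this
  have := (((hl1.sub hl2).sub_const (Real.log (((j : ℝ) + α + d) ^ 2))).add_const
      (Real.log (((j : ℝ) + α - d) ^ 2))).div_const 2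
  convert this using 1
  · rfl
  · rfl
  · rfl
  unfold S
  field_simp
  ring

lemma S_bound (hα : 0 < α) (hd0 : 0 < d) (hdα : d < α) (j : ℕ) (y : ℝ) :
    ‖S α d j y‖ ≤ 2 * d / (((j : ℝ) + α - d) ^ 2) := by
  have hbj := hb hd0 hdα j
  have haj := ha hα hd0 j
  have hA : 0 < ((j : ℝ) + α + d) ^ 2 + y ^ 2 := by positivity
  have hB : 0 < ((j : ℝ) + α - d) ^ 2 + y ^ 2 := by positivity
  have hjα : 0 < (j : ℝ) + α := by have : (0:ℝ) ≤ j := Nat.cast_nonneg j; linarith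
  have habs : ‖S α d j y‖ = 4 * d * ((j : ℝ) + α) * |y| /
      ((((j : ℝ) + α - d) ^ 2 + y ^ 2) * (((j : ℝ) + α + d) ^ 2 + y ^ 2)) := by
    rw [Real.norm_eq_abs, S, abs_div, abs_of_pos (by positivity : (0:ℝ) <
      ((((j : ℝ) + α - d) ^ 2 + y ^ 2) * (((j : ℝ) + α + d) ^ 2 + y ^ 2)))]
    congr 1
    rw [abs_mul]
    rw [abs_of_nonpos (by nlinarith : -4 * d * ((j : ℝ) + α) ≤ 0)]
    ring
  rw [habs, div_le_div_iff₀ (by positivity) (by positivity)]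
  have h1 : 2 * ((j : ℝ) + α - d) * |y| ≤ ((j : ℝ) + α - d) ^ 2 + y ^ 2 := by
    nlinarith [sq_nonneg (|y| - ((j : ℝ) + α - d)), _root_.sq_abs y]
  have h2 : ((j : ℝ) + α) * ((j : ℝ) + α - d) ≤ ((j : ℝ) + α + d) ^ 2 + y ^ 2 := by
    nlinarith [sq_nonneg y]
  have h3 : (2 * ((j : ℝ) + α - d) * |y|) * (((j : ℝ) + α) * ((j : ℝ) + α - d)) ≤
      (((j : ℝ) + α - d) ^ 2 + y ^ 2) * (((j : ℝ) + α + d) ^ 2 + y ^ 2) :=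
    mul_le_mul h1 h2 (by positivity) hB.le
  calc 4 * d * ((j : ℝ) + α) * |y| * ((j : ℝ) + α - d) ^ 2
      = 2 * d * ((2 * ((j : ℝ) + α - d) * |y|) * (((j : ℝ) + α) * ((j : ℝ) + α - d))) := by
        ring
    _ ≤ 2 * d * ((((j : ℝ) + α - d) ^ 2 + y ^ 2) * (((j : ℝ) + α + d) ^ 2 + y ^ 2)) := by
        apply mul_le_mul_of_nonneg_left h3 (by positivity)

lemma summable_c (hα : 0 < α) (hd0 : 0 < d) (hdα : d < α) :
    Summable (fun j : ℕ => 2 * d / (((j : ℝ) + α - d) ^ 2)) := by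
  have base : Summable (fun n : ℕ => 2 * d * (1 / ((n : ℝ) + 1) ^ 2)) := by
    have h0 : Summable (fun n : ℕ => 1 / (n : ℝ) ^ 2) :=
      Real.summable_one_div_nat_pow.mpr one_lt_two
    have := (summable_nat_add_iff 1).mpr h0
    apply Summable.mul_left
    simpa using this
  rw [← summable_nat_add_iff 1]
  apply Summable.of_nonneg_of_le (fun j => by positivity) (fun j => ?_) base
  rw [mul_one_div]
  apply div_le_div_of_nonneg_left (by positivity) (by positivity)
  have hbj := hb hd0 hdα (j + 1)
  have : ((j : ℝ) + 1) ≤ ((j + 1 : ℕ) : ℝ) + α - d := by push_cast; linarith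
  nlinarith [Nat.cast_nonneg (α := ℝ) j]

lemma u_zero (j : ℕ) : u α d j 0 = 0 := by
  simp only [u]
  ring_nf

lemma log_abs_eq (w : ℂ) : Real.log (norm w) = Real.log (w.re ^ 2 + w.im ^ 2) / 2 := by
  rw [Complex.norm_def, Real.log_sqrt (normSq_nonneg w), normSq_apply]
  ring_nf

lemma log_abs_gammaSeq {z : ℂ} (hz : 0 < z.re) {n : ℕ} (hn : 1 ≤ n) :
    Real.log (norm (Complex.GammaSeq z n)) =
      z.re * Real.log n + Real.log (Nat.factorial n : ℝ) -
        ∑ j ∈ Finset.range (n + 1), Real.log (norm (z + j)) := by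
  have hzj : ∀ j : ℕ, z + (j : ℂ) ≠ 0 := by
    intro j h
    have h2 : (z + (j : ℂ)).re = 0 := by rw [h]; simp
    simp only [Complex.add_re, Complex.natCast_re] at h2
    have : (0:ℝ) ≤ j := Nat.cast_nonneg j
    linarith
  have hnpos : (0:ℝ) < (n : ℝ) := by exact_mod_cast hn
  have hcpow : (n : ℂ) ^ z ≠ 0 := by
    rw [Ne, Complex.cpow_eq_zero_iff]
    push_neg
    intro h
    exact absurd h (by exact_mod_cast hnpos.ne')
  have hfact : (Nat.factorial n : ℂ) ≠ 0 := by exact_mod_cast (Nat.factorial_pos n).ne'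
  have hprod : ∀ j ∈ Finset.range (n + 1), norm (z + (j : ℂ)) ≠ 0 :=
    fun j _ => (norm_ne_zero_iff.mpr (hzj j))
  rw [Complex.GammaSeq, norm_div, norm_mul, norm_prod]
  rw [Real.log_div (mul_ne_zero (norm_ne_zero_iff.mpr hcpow) (by
    rw [Complex.norm_natCast]; exact_mod_cast (Nat.factorial_pos n).ne')) (by
    apply Finset.prod_ne_zero_iff.mpr; intro j hj; exact hprod j hj)]
  rw [Real.log_mul (norm_ne_zero_iff.mpr hcpow) (by
    rw [Complex.norm_natCast]; exact_mod_cast (Nat.factorial_pos n).ne')]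
  rw [Real.log_prod hprod]
  congr 2
  · rw [show (n : ℂ) = ((n : ℝ) : ℂ) by push_cast; rfl,
      norm_cpow_eq_rpow_re_of_pos hnpos, Real.log_rpow hnpos]
  · rw [Complex.norm_natCast]

variable {α d : ℝ}

lemma tendsto_log_abs_gammaSeq {z : ℂ} (hz : 0 < z.re) :
    Tendsto (fun n => Real.log (norm (Complex.GammaSeq z n))) atTop
      (𝓝 (Real.log (norm (Complex.Gamma z)))) := by
  have h1 : Complex.Gamma z ≠ 0 := Complex.Gamma_ne_zero_of_re_pos hz
  have h3 := (continuous_norm.tendsto (Complex.Gamma z)).comp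
    (Complex.GammaSeq_tendsto_Gamma z)
  exact ((Real.continuousAt_log (norm_ne_zero_iff.mpr h1)).tendsto).comp h3

lemma per_term (hα : 0 < α) (hd0 : 0 < d) (hdα : d < α) (y : ℝ) (j : ℕ) :
    Real.log (norm (((α : ℂ) - (-(d : ℂ) + (y : ℂ) * I)) + (j : ℂ)))
      + Real.log (norm (((α : ℂ) - (d : ℂ)) + (j : ℂ)))
      - Real.log (norm (((α : ℂ) + (-(d : ℂ) + (y : ℂ) * I)) + (j : ℂ)))
      - Real.log (norm (((α : ℂ) + (d : ℂ)) + (j : ℂ))) = u α d j y := by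
  rw [log_abs_eq, log_abs_eq, log_abs_eq, log_abs_eq]
  unfold u
  simp only [Complex.add_re, Complex.add_im, Complex.sub_re, Complex.sub_im, Complex.neg_re,
    Complex.neg_im, Complex.mul_re, Complex.mul_im, Complex.I_re, Complex.I_im,
    Complex.ofReal_re, Complex.ofReal_im, Complex.natCast_re, Complex.natCast_im]
  ring_nf

lemma sum_eq_G (hα : 0 < α) (hd0 : 0 < d) (hdα : d < α) (y : ℝ) {n : ℕ} (hn : 1 ≤ n) :
    ∑ j ∈ Finset.range (n + 1), u α d j y =
      Real.log (norm (Complex.GammaSeq ((α : ℂ) + (-(d : ℂ) + (y : ℂ) * I)) n))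
      - Real.log (norm (Complex.GammaSeq ((α : ℂ) - (-(d : ℂ) + (y : ℂ) * I)) n))
      - Real.log (norm (Complex.GammaSeq ((α : ℂ) - (d : ℂ)) n))
      + Real.log (norm (Complex.GammaSeq ((α : ℂ) + (d : ℂ)) n)) := by
  have hz1 : ((α : ℂ) + (-(d : ℂ) + (y : ℂ) * I)).re = α - d := by simp; ring
  have hz2 : ((α : ℂ) - (-(d : ℂ) + (y : ℂ) * I)).re = α + d := by simp
  have hw1 : ((α : ℂ) - (d : ℂ)).re = α - d := by simp
  have hw2 : ((α : ℂ) + (d : ℂ)).re = α + d := by simp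
  rw [log_abs_gammaSeq (by rw [hz1]; linarith) hn, log_abs_gammaSeq (by rw [hz2]; linarith) hn,
    log_abs_gammaSeq (by rw [hw1]; linarith) hn, log_abs_gammaSeq (by rw [hw2]; linarith) hn,
    hz1, hz2, hw1, hw2]
  have : ∑ j ∈ Finset.range (n + 1), u α d j y =
      ∑ j ∈ Finset.range (n + 1),
        (Real.log (norm (((α : ℂ) - (-(d : ℂ) + (y : ℂ) * I)) + (j : ℂ)))
          + Real.log (norm (((α : ℂ) - (d : ℂ)) + (j : ℂ)))
          - Real.log (norm (((α : ℂ) + (-(d : ℂ) + (y : ℂ) * I)) + (j : ℂ)))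
          - Real.log (norm (((α : ℂ) + (d : ℂ)) + (j : ℂ)))) :=
    Finset.sum_congr rfl (fun j _ => (per_term hα hd0 hdα y j).symm)
  rw [this]
  simp only [Finset.sum_sub_distrib, Finset.sum_add_distrib]
  ring

lemma tsum_u_eq (hα : 0 < α) (hd0 : 0 < d) (hdα : d < α) (y : ℝ)
    (hsum : Summable (fun j => u α d j y)) :
    ∑' j, u α d j y =
      Real.log (norm (Complex.Gamma ((α : ℂ) + (-(d : ℂ) + (y : ℂ) * I))))
      - Real.log (norm (Complex.Gamma ((α : ℂ) - (-(d : ℂ) + (y : ℂ) * I))))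
      - Real.log (norm (Complex.Gamma ((α : ℂ) - (d : ℂ))))
      + Real.log (norm (Complex.Gamma ((α : ℂ) + (d : ℂ)))) := by
  have hz1 : ((α : ℂ) + (-(d : ℂ) + (y : ℂ) * I)).re = α - d := by simp; ring
  have hz2 : ((α : ℂ) - (-(d : ℂ) + (y : ℂ) * I)).re = α + d := by simp
  have hw1 : ((α : ℂ) - (d : ℂ)).re = α - d := by simp
  have hw2 : ((α : ℂ) + (d : ℂ)).re = α + d := by simp
  have hG : Tendsto (fun n =>
      Real.log (norm (Complex.GammaSeq ((α : ℂ) + (-(d : ℂ) + (y : ℂ) * I)) n))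
      - Real.log (norm (Complex.GammaSeq ((α : ℂ) - (-(d : ℂ) + (y : ℂ) * I)) n))
      - Real.log (norm (Complex.GammaSeq ((α : ℂ) - (d : ℂ)) n))
      + Real.log (norm (Complex.GammaSeq ((α : ℂ) + (d : ℂ)) n))) atTop
      (𝓝 (Real.log (norm (Complex.Gamma ((α : ℂ) + (-(d : ℂ) + (y : ℂ) * I))))
      - Real.log (norm (Complex.Gamma ((α : ℂ) - (-(d : ℂ) + (y : ℂ) * I))))
      - Real.log (norm (Complex.Gamma ((α : ℂ) - (d : ℂ))))
      + Real.log (norm (Complex.Gamma ((α : ℂ) + (d : ℂ)))))) := by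
    exact (((tendsto_log_abs_gammaSeq (by rw [hz1]; linarith)).sub
      (tendsto_log_abs_gammaSeq (by rw [hz2]; linarith))).sub
      (tendsto_log_abs_gammaSeq (by rw [hw1]; linarith))).add
      (tendsto_log_abs_gammaSeq (by rw [hw2]; linarith))
  have hpartial : Tendsto (fun n => ∑ j ∈ Finset.range (n + 1), u α d j y) atTop
      (𝓝 (∑' j, u α d j y)) :=
    hsum.hasSum.tendsto_sum_nat.comp (tendsto_add_atTop_nat 1)
  refine tendsto_nhds_unique hpartial (hG.congr' ?_)
  filter_upwards [eventually_ge_atTop 1] with n hn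
  exact (sum_eq_G hα hd0 hdα y hn).symm


end ReHAux

/-- For `h(z) = log Γ(α+z) - log Γ(α-z) - 2ψ(α) z` and `0 < d < α`, the real part along
the vertical line `z = -d + iy` satisfies
`d/dy Re h(-d+iy) = Σ_{n≥0} -4d(n+α)y / (((n+α-d)² + y²)((n+α+d)² + y²))`;
in particular `y ↦ Re h(-d+iy)` is strictly increasing on `y ≤ 0`, strictly decreasing
on `y ≥ 0`, and attains its maximum at `y = 0`. -/
theorem re_h_on_vertical_line (α d : ℝ) (hα : 0 < α) (hd0 : 0 < d) (hdα : d < α) :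
    (∀ y : ℝ,
      HasDerivAt
        (fun y : ℝ =>
          (Complex.log (Complex.Gamma (↑α + (-↑d + ↑y * Complex.I)))
            - Complex.log (Complex.Gamma (↑α - (-↑d + ↑y * Complex.I)))
            - 2 * ↑(_root_.digamma α) * (-↑d + ↑y * Complex.I)).re)
        (∑' n : ℕ, -4 * d * ((n : ℝ) + α) * y /
          ((((n : ℝ) + α - d) ^ 2 + y ^ 2) * (((n : ℝ) + α + d) ^ 2 + y ^ 2))) y) ∧
    StrictMonoOn
      (fun y : ℝ =>
        (Complex.log (Complex.Gamma (↑α + (-↑d + ↑y * Complex.I)))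
          - Complex.log (Complex.Gamma (↑α - (-↑d + ↑y * Complex.I)))
          - 2 * ↑(_root_.digamma α) * (-↑d + ↑y * Complex.I)).re) (Set.Iic 0) ∧
    StrictAntiOn
      (fun y : ℝ =>
        (Complex.log (Complex.Gamma (↑α + (-↑d + ↑y * Complex.I)))
          - Complex.log (Complex.Gamma (↑α - (-↑d + ↑y * Complex.I)))
          - 2 * ↑(_root_.digamma α) * (-↑d + ↑y * Complex.I)).re) (Set.Ici 0) ∧
    ∀ y : ℝ,
      (Complex.log (Complex.Gamma (↑α + (-↑d + ↑y * Complex.I)))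
        - Complex.log (Complex.Gamma (↑α - (-↑d + ↑y * Complex.I)))
        - 2 * ↑(_root_.digamma α) * (-↑d + ↑y * Complex.I)).re
      ≤ (Complex.log (Complex.Gamma (↑α + (-↑d + (0 : ℝ) * Complex.I)))
        - Complex.log (Complex.Gamma (↑α - (-↑d + (0 : ℝ) * Complex.I)))
        - 2 * ↑(_root_.digamma α) * (-↑d + (0 : ℝ) * Complex.I)).re := by
  set F : ℝ → ℝ := fun y : ℝ =>
      (Complex.log (Complex.Gamma (↑α + (-↑d + ↑y * Complex.I)))
        - Complex.log (Complex.Gamma (↑α - (-↑d + ↑y * Complex.I)))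
        - 2 * ↑(_root_.digamma α) * (-↑d + ↑y * Complex.I)).re with hF
  have hc := ReHAux.summable_c hα hd0 hdα
  have hder : ∀ (j : ℕ) (t : ℝ), HasDerivAt (ReHAux.u α d j) (ReHAux.S α d j t) t :=
    fun j t => ReHAux.hasDerivAt_u hα hd0 hdα j t
  have hbnd : ∀ (j : ℕ) (t : ℝ), ‖ReHAux.S α d j t‖ ≤ 2 * d / (((j : ℝ) + α - d) ^ 2) :=
    fun j t => ReHAux.S_bound hα hd0 hdα j t
  have h0 : Summable (fun j : ℕ => ReHAux.u α d j 0) :=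
    summable_zero.congr fun j => (ReHAux.u_zero j).symm
  have hsum : ∀ t : ℝ, Summable (fun j : ℕ => ReHAux.u α d j t) :=
    fun t => summable_of_summable_hasDerivAt hc hder hbnd h0 t
  have hts : ∀ t : ℝ, HasDerivAt (fun s : ℝ => ∑' j : ℕ, ReHAux.u α d j s)
      (∑' j : ℕ, ReHAux.S α d j t) t :=
    fun t => hasDerivAt_tsum hc hder hbnd h0 t
  have hre : ∀ t : ℝ, F t =
      Real.log (norm (Complex.Gamma ((α : ℂ) + (-(d : ℂ) + (t : ℂ) * I))))
      - Real.log (norm (Complex.Gamma ((α : ℂ) - (-(d : ℂ) + (t : ℂ) * I))))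
      + 2 * _root_.digamma α * d := by
    intro t
    rw [hF]
    simp only [Complex.sub_re, Complex.log_re, Complex.mul_re, Complex.mul_im, Complex.add_re,
      Complex.add_im, Complex.neg_re, Complex.neg_im, Complex.I_re, Complex.I_im,
      Complex.ofReal_re, Complex.ofReal_im, Complex.re_ofNat, Complex.im_ofNat]
    ring
  have hfeq : ∀ t : ℝ, F t = (∑' j : ℕ, ReHAux.u α d j t) +
      (Real.log (norm (Complex.Gamma ((α : ℂ) - (d : ℂ))))
        - Real.log (norm (Complex.Gamma ((α : ℂ) + (d : ℂ)))) + 2 * _root_.digamma α * d) := by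
    intro t
    have h1 := ReHAux.tsum_u_eq hα hd0 hdα t (hsum t)
    rw [hre t, h1]
    ring
  have hderiv : ∀ t : ℝ, HasDerivAt F (∑' j : ℕ, ReHAux.S α d j t) t := by
    intro t
    refine HasDerivAt.congr_of_eventuallyEq ((hts t).add_const
      (Real.log (norm (Complex.Gamma ((α : ℂ) - (d : ℂ))))
        - Real.log (norm (Complex.Gamma ((α : ℂ) + (d : ℂ)))) + 2 * _root_.digamma α * d)) ?_
    exact Filter.Eventually.of_forall fun s => hfeq s
  have hSsum : ∀ t : ℝ, Summable (fun j : ℕ => ReHAux.S α d j t) :=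
    fun t => Summable.of_norm_bounded hc (fun j => hbnd j t)
  have hTpos : ∀ t : ℝ, t < 0 → 0 < ∑' j : ℕ, ReHAux.S α d j t := by
    intro t ht
    have hpos : ∀ j : ℕ, 0 < ReHAux.S α d j t := by
      intro j
      have hbj := ReHAux.hb hd0 hdα j
      have haj := ReHAux.ha hα hd0 j
      have hjα : 0 < (j : ℝ) + α := by have : (0:ℝ) ≤ j := Nat.cast_nonneg j; linarith
      have h4 : 0 < (4 * d * ((j : ℝ) + α)) * (-t) := mul_pos (by positivity) (by linarith)
      apply div_pos (by nlinarith [h4]) (by positivity)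
    exact Summable.tsum_pos (hSsum t) (fun j => (hpos j).le) 0 (hpos 0)
  have hTneg : ∀ t : ℝ, 0 < t → (∑' j : ℕ, ReHAux.S α d j t) < 0 := by
    intro t ht
    have hneg : ∀ j : ℕ, ReHAux.S α d j t < 0 := by
      intro j
      have hbj := ReHAux.hb hd0 hdα j
      have haj := ReHAux.ha hα hd0 j
      have hjα : 0 < (j : ℝ) + α := by have : (0:ℝ) ≤ j := Nat.cast_nonneg j; linarith
      have h4 : 0 < (4 * d * ((j : ℝ) + α)) * t := mul_pos (by positivity) ht
      apply div_neg_of_neg_of_pos (by nlinarith [h4]) (by positivity)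
    have h1 : 0 < ∑' j : ℕ, -ReHAux.S α d j t :=
      Summable.tsum_pos ((hSsum t).neg) (fun j => (neg_pos.mpr (hneg j)).le) 0 (neg_pos.mpr (hneg 0))
    rw [tsum_neg] at h1
    linarith
  have hcont : Continuous F := by
    have : Differentiable ℝ F := fun t => (hderiv t).differentiableAt
    exact this.continuous
  have hmono : StrictMonoOn F (Set.Iic 0) := by
    apply strictMonoOn_of_deriv_pos (convex_Iic 0) hcont.continuousOn
    intro t ht
    rw [interior_Iic] at ht
    rw [(hderiv t).deriv]
    exact hTpos t ht
  have hanti : StrictAntiOn F (Set.Ici 0) := by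
    apply strictAntiOn_of_deriv_neg (convex_Ici 0) hcont.continuousOn
    intro t ht
    rw [interior_Ici] at ht
    rw [(hderiv t).deriv]
    exact hTneg t ht
  refine ⟨fun y => hderiv y, hmono, hanti, ?_⟩
  intro y
  rcases lt_trichotomy y 0 with hy | hy | hy
  · exact le_of_lt (hmono (Set.mem_Iic.mpr hy.le) (Set.mem_Iic.mpr le_rfl) hy)
  · subst hy; exact le_rfl
  · exact le_of_lt (hanti (Set.mem_Ici.mpr le_rfl) (Set.mem_Ici.mpr hy.le) hy)
end

section
/- For real v, w and d ∈ (0, 1/2), with Z = -d + iv and W = -d + iw, there exists a constant C > 0 (depending only on d) such that |sin(π(Z-W)) / sin(π(Z+W))| ≤ C · e^{π|v-w| - π|v+w|}. -/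
open Complex Real

/-- For `Z = -d + iv`, `W = -d + iw` with `0 < d < 1/2`, there is `C > 0` with
`|sin(π(Z-W)) / sin(π(Z+W))| ≤ C e^{π|v-w| - π|v+w|}` for all real `v, w`. -/
theorem sin_ratio_bound (d : ℝ) (hd0 : 0 < d) (hd : d < 1 / 2) :
    ∃ C > (0 : ℝ), ∀ v w : ℝ,
      ‖Complex.sin (↑Real.pi * ((-↑d + ↑v * Complex.I) - (-↑d + ↑w * Complex.I)))‖
        / ‖Complex.sin (↑Real.pi * ((-↑d + ↑v * Complex.I) + (-↑d + ↑w * Complex.I)))‖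
      ≤ C * Real.exp (Real.pi * |v - w| - Real.pi * |v + w|) := by
  have hpi := Real.pi_pos
  set s := Real.sin (2 * Real.pi * d) with hs_def
  have hs : 0 < s := Real.sin_pos_of_pos_of_lt_pi (by nlinarith) (by nlinarith)
  set c := min s 1 / 3 with hc_def
  have hc : 0 < c := by positivity
  have hc3 : 3 * c ≤ s := by
    have : min s 1 ≤ s := min_le_left _ _
    nlinarith
  have hc13 : c ≤ 1 / 3 := by
    have : min s 1 ≤ 1 := min_le_right _ _
    nlinarith
  refine ⟨1 / c, by positivity, fun v w => ?_⟩
  -- numerator bound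
  have hnum : ‖Complex.sin (↑Real.pi *
        ((-↑d + ↑v * Complex.I) - (-↑d + ↑w * Complex.I)))‖
      ≤ Real.exp (Real.pi * |v - w|) := by
    have h1 : (↑Real.pi * ((-↑d + ↑v * Complex.I) - (-↑d + ↑w * Complex.I)) : ℂ)
        = (↑(Real.pi * (v - w)) : ℂ) * Complex.I := by push_cast; ring
    rw [h1, Complex.sin_mul_I, norm_mul, Complex.norm_I, mul_one,
      ← Complex.ofReal_sinh, Complex.norm_real, Real.norm_eq_abs, Real.abs_sinh]
    have h2 : |Real.pi * (v - w)| = Real.pi * |v - w| := by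
      rw [abs_mul, abs_of_pos hpi]
    rw [h2, Real.sinh_eq]
    nlinarith [Real.exp_pos (-(Real.pi * |v - w|)), Real.exp_pos (Real.pi * |v - w|)]
  -- denominator
  set A := ‖Complex.sin (↑Real.pi *
      ((-↑d + ↑v * Complex.I) + (-↑d + ↑w * Complex.I)))‖ with hA_def
  have hA0 : 0 ≤ A := norm_nonneg _
  have hden_eq : (↑Real.pi * ((-↑d + ↑v * Complex.I) + (-↑d + ↑w * Complex.I)) : ℂ)
      = (↑(-(2 * Real.pi * d)) : ℂ) + (↑(Real.pi * (v + w)) : ℂ) * Complex.I := by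
    push_cast; ring
  set a := -(2 * Real.pi * d) with ha_def
  set b := Real.pi * (v + w) with hb_def
  have hsin_eq : Complex.sin ((↑a : ℂ) + ↑b * Complex.I)
      = ↑(Real.sin a * Real.cosh b) + ↑(Real.cos a * Real.sinh b) * Complex.I := by
    rw [Complex.sin_add, Complex.cos_mul_I, Complex.sin_mul_I]
    push_cast
    ring
  have hA2 : A ^ 2 = Real.sin a ^ 2 + Real.sinh b ^ 2 := by
    rw [hA_def, hden_eq, hsin_eq, Complex.sq_norm, Complex.normSq_add_mul_I]
    have h1 := Real.sin_sq_add_cos_sq a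
    have h2 := Real.cosh_sq b
    nlinarith
  have hsa : Real.sin a ^ 2 = s ^ 2 := by
    rw [ha_def, Real.sin_neg, hs_def]; ring
  -- lower bound on A
  have hA : c * Real.exp (Real.pi * |v + w|) ≤ A := by
    have hEb : Real.exp (Real.pi * |v + w|) = Real.exp |b| := by
      rw [hb_def, abs_mul, abs_of_pos hpi]
    rw [hEb]
    set E := Real.exp |b| with hE_def
    have hE1 : 1 ≤ E := Real.one_le_exp (abs_nonneg b)
    rcases le_or_gt E 3 with h3 | h3
    · -- A ≥ s ≥ c * E
      have hAs : s ≤ A := by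
        rw [← Real.sqrt_sq hs.le, ← Real.sqrt_sq hA0]
        exact Real.sqrt_le_sqrt (by nlinarith [sq_nonneg (Real.sinh b)])
      nlinarith
    · -- A ≥ |sinh b| = (E - 1/E)/2 ≥ E/3
      have hsinh : Real.sinh |b| = (E - Real.exp (-|b|)) / 2 := by
        rw [Real.sinh_eq, hE_def]
      have hEinv : Real.exp (-|b|) ≤ 1 := Real.exp_le_one_iff.mpr (neg_nonpos.mpr (abs_nonneg b))
      have hAsinh : Real.sinh |b| ≤ A := by
        rw [← Real.abs_sinh, ← Real.sqrt_sq_eq_abs, ← Real.sqrt_sq hA0]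
        exact Real.sqrt_le_sqrt (by nlinarith [sq_nonneg (Real.sin a)])
      nlinarith [Real.exp_pos (-|b|)]
  have hApos : 0 < A := lt_of_lt_of_le (by positivity) hA
  calc ‖Complex.sin (↑Real.pi *
          ((-↑d + ↑v * Complex.I) - (-↑d + ↑w * Complex.I)))‖ / A
      ≤ Real.exp (Real.pi * |v - w|) / (c * Real.exp (Real.pi * |v + w|)) :=
        div_le_div₀ (Real.exp_nonneg _) hnum (by positivity) hA
    _ = 1 / c * Real.exp (Real.pi * |v - w| - Real.pi * |v + w|) := by
        rw [Real.exp_sub]; ring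
end

section
/- Let F_N : ℝ → [0,1] be CDFs of random variables 𝒳_N, and suppose: (i) the family (𝒳_N) is tight, (ii) there are constants C, λ > 0 with F_N(z) ≤ C·e^{λz} for all z < 0 and all large N, and (iii) for some A ∈ (0, λ) and some continuous function Φ : ℝ → ℝ, for every y ∈ ℝ, ∫_ℝ F_N(z+r)·e^{−Az}·e^{izy} dz converges as N → ∞ to ∫_ℝ Φ(z)·e^{−Az}·e^{izy} dz for all r, where Φ(·+r)e^{−A·} ∈ L²(ℝ). Then every subsequential weak limit of (𝒳_N) has CDF equal (at continuity points) to Φ, and hence 𝒳_N converges weakly to the law with CDF Φ. -/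
open MeasureTheory Filter Complex

open scoped FourierTransform

set_option maxHeartbeats 1000000

private lemma aux_le_of_forall_pos {x y : ℝ} (h : ∀ ε : ℝ, 0 < ε → x ≤ y + ε) : x ≤ y := by
  by_contra hlt
  push_neg at hlt
  have := h ((x - y) / 2) (by linarith)
  linarith

private lemma aux_exp_norm_one (zz y : ℝ) : ‖Complex.exp (Complex.I * zz * y)‖ = 1 := by
  rw [Complex.norm_exp]
  simp [Complex.mul_re, Complex.mul_im]

private lemma aux_exp_Iic {b : ℝ} (hb : 0 < b) :
    IntegrableOn (fun z => Real.exp (b * z)) (Set.Iic 0) := by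
  rw [← integrable_indicator_iff measurableSet_Iic]
  have : (Set.Iic (0:ℝ)).indicator (fun z => Real.exp (b * z))
      = fun z => ((Set.Iic (0:ℝ)).indicator Real.exp) (b * z) := by
    ext z
    by_cases hz : z ≤ 0
    · simp [Set.indicator_apply, Set.mem_Iic, hz, mul_nonpos_of_nonneg_of_nonpos hb.le hz]
    · push_neg at hz
      simp [Set.indicator_apply, Set.mem_Iic, not_le.2 hz, not_le.2 (mul_pos hb hz)]
  rw [this]
  exact ((integrable_indicator_iff measurableSet_Iic).2 (integrableOn_exp_Iic 0)).comp_mul_left'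
    hb.ne'

private lemma aux_integrable_bound {a b : ℝ} (ha : 0 < a) (hb : 0 < b) (K : ℝ) :
    Integrable (fun z : ℝ => K * min (Real.exp (b * z)) (Real.exp (-a * z))) := by
  apply Integrable.const_mul
  have hmeas : Continuous fun z : ℝ => min (Real.exp (b * z)) (Real.exp (-a * z)) :=
    (Real.continuous_exp.comp (continuous_const.mul continuous_id)).min
      (Real.continuous_exp.comp (continuous_const.mul continuous_id))
  rw [← integrableOn_univ, ← Set.Iic_union_Ioi (a := (0:ℝ)), integrableOn_union]
  constructor
  · apply (aux_exp_Iic hb).mono' hmeas.aestronglyMeasurable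
    apply ae_of_all
    intro z
    rw [Real.norm_eq_abs, _root_.abs_of_pos (lt_min (Real.exp_pos _) (Real.exp_pos _))]
    exact min_le_left _ _
  · apply (exp_neg_integrableOn_Ioi 0 ha).mono' hmeas.aestronglyMeasurable
    apply ae_of_all
    intro z
    rw [Real.norm_eq_abs, _root_.abs_of_pos (lt_min (Real.exp_pos _) (Real.exp_pos _))]
    exact min_le_right _ _

/-- Squeeze argument: if a sequence of monotone functions converges at every rational to `L`,
and `G` is squeezed between the values of `L` at rationals on either side, then the sequence
converges to `G x` at every continuity point `x` of `G`. -/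
private lemma aux_tendsto_of_rat (F : ℕ → ℝ → ℝ) (hFmono : ∀ k, Monotone (F k))
    (L : ℚ → ℝ) (hLq : ∀ q : ℚ, Tendsto (fun k => F k (q : ℝ)) atTop (nhds (L q)))
    (G : ℝ → ℝ)
    (hGle : ∀ (x : ℝ) (q : ℚ), x < (q : ℝ) → G x ≤ L q)
    (hGge : ∀ (x : ℝ) (q : ℚ), (q : ℝ) < x → L q ≤ G x)
    (x : ℝ) (hx : ContinuousAt G x) :
    Tendsto (fun k => F k x) atTop (nhds (G x)) := by
  rw [tendsto_order]
  constructor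
  · intro b hb
    have hmem : G ⁻¹' Set.Ioi b ∈ nhds x := hx.preimage_mem_nhds (Ioi_mem_nhds hb)
    obtain ⟨δ, hδ, hball⟩ := Metric.mem_nhds_iff.1 hmem
    obtain ⟨q, hq1, hq2⟩ := exists_rat_btwn (show x - δ / 2 < x by linarith)
    have hmemb : x - δ / 2 ∈ Metric.ball x δ := by
      rw [Metric.mem_ball, Real.dist_eq]
      rw [show x - δ / 2 - x = -(δ / 2) by ring, abs_neg, _root_.abs_of_pos (by linarith)]
      linarith
    have h1 : b < G (x - δ / 2) := hball hmemb
    have h2 : b < L q := h1.trans_le (hGle _ _ hq1)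
    filter_upwards [(hLq q).eventually_const_lt h2] with k hk
    exact hk.trans_le (hFmono k hq2.le)
  · intro b hb
    have hmem : G ⁻¹' Set.Iio b ∈ nhds x := hx.preimage_mem_nhds (Iio_mem_nhds hb)
    obtain ⟨δ, hδ, hball⟩ := Metric.mem_nhds_iff.1 hmem
    obtain ⟨q, hq1, hq2⟩ := exists_rat_btwn (show x < x + δ / 2 by linarith)
    have hmemb : x + δ / 2 ∈ Metric.ball x δ := by
      rw [Metric.mem_ball, Real.dist_eq]
      rw [show x + δ / 2 - x = δ / 2 by ring, _root_.abs_of_pos (by linarith)]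
      linarith
    have h1 : G (x + δ / 2) < b := hball hmemb
    have h2 : L q < b := (hGge _ _ hq2).trans_lt h1
    filter_upwards [(hLq q).eventually_lt_const h2] with k hk
    exact (hFmono k hq1.le).trans_lt hk

/-- Uniqueness of the weak limit via damped Fourier transforms: if the laws `μ N` are
tight, have the uniform lower-tail bound `F_N(z) ≤ C e^{λ z}` for `z < 0`, and for some
`0 < A < λ` the damped Fourier transforms of the CDFs converge to those of a continuous
function `Φ` with `Φ(·+r) e^{-A·} ∈ L²`, then the CDFs converge pointwise to `Φ`,
i.e. the random variables converge weakly to the law with CDF `Φ`. -/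
theorem weak_convergence_from_damped_fourier
    (μ : ℕ → Measure ℝ) (hprob : ∀ N, IsProbabilityMeasure (μ N))
    (htight : ∀ ε > (0 : ℝ), ∃ M : ℝ, ∀ N, ((μ N) (Set.Icc (-M) M)ᶜ).toReal ≤ ε)
    (C lam : ℝ) (hC : 0 < C) (hlam : 0 < lam) (N₁ : ℕ)
    (htail : ∀ N : ℕ, N₁ ≤ N → ∀ z < (0 : ℝ),
      ((μ N) (Set.Iic z)).toReal ≤ C * Real.exp (lam * z))
    (A : ℝ) (hA0 : 0 < A) (hA : A < lam)
    (Φ : ℝ → ℝ) (hΦc : Continuous Φ)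
    (hL2 : ∀ r : ℝ, MemLp (fun z => Φ (z + r) * Real.exp (-A * z)) 2 volume)
    (hconv : ∀ r y : ℝ,
      Tendsto
        (fun N : ℕ => ∫ z : ℝ,
          (((μ N) (Set.Iic (z + r))).toReal * Real.exp (-A * z) : ℂ)
            * Complex.exp (Complex.I * z * y))
        atTop
        (nhds (∫ z : ℝ,
          ((Φ (z + r) * Real.exp (-A * z) : ℝ) : ℂ) * Complex.exp (Complex.I * z * y)))) :
    ∀ z : ℝ, Tendsto (fun N : ℕ => ((μ N) (Set.Iic z)).toReal) atTop (nhds (Φ z)) := by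
  intro z
  set F : ℕ → ℝ → ℝ := fun n t => ((μ n) (Set.Iic t)).toReal with hF_def
  have hFmono : ∀ n, Monotone (F n) := fun n s t hst =>
    ENNReal.toReal_mono (measure_ne_top _ _) (measure_mono (Set.Iic_subset_Iic.2 hst))
  have hF0 : ∀ n t, 0 ≤ F n t := fun n t => ENNReal.toReal_nonneg
  have hF1 : ∀ n t, F n t ≤ 1 := by
    intro n t
    have h1 : (μ n) (Set.Iic t) ≤ 1 := prob_le_one
    calc F n t ≤ (1 : ENNReal).toReal := ENNReal.toReal_mono ENNReal.one_ne_top h1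
      _ = 1 := by simp
  apply tendsto_of_subseq_tendsto
  intro ns hns
  -- Helly selection via sequential compactness of `ℚ → Icc 0 1`
  obtain ⟨a, -, φ, hφ, hconv'⟩ :=
    isCompact_univ.tendsto_subseq
      (x := fun k => (fun q : ℚ => (⟨F (ns k) q, hF0 _ _, hF1 _ _⟩ : Set.Icc (0:ℝ) 1)))
      (fun n => Set.mem_univ _)
  refine ⟨φ, ?_⟩
  set m : ℕ → ℕ := fun k => ns (φ k) with hm_def
  have hm : Tendsto m atTop atTop := hns.comp hφ.tendsto_atTop
  set L : ℚ → ℝ := fun q => (a q : ℝ) with hL_def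
  have hLq : ∀ q : ℚ, Tendsto (fun k => F (m k) (q : ℝ)) atTop (nhds (L q)) := by
    intro q
    have h1 := (tendsto_pi_nhds.1 hconv') q
    exact (continuous_subtype_val.tendsto (a q)).comp h1
  have hL0 : ∀ q, 0 ≤ L q := fun q => (a q).2.1
  have hL1 : ∀ q, L q ≤ 1 := fun q => (a q).2.2
  have hLmono : ∀ {q q' : ℚ}, q ≤ q' → L q ≤ L q' := by
    intro q q' h
    exact le_of_tendsto_of_tendsto' (hLq q) (hLq q')
      (fun k => hFmono (m k) (by exact_mod_cast h))
  haveI hne : ∀ x : ℝ, Nonempty {q : ℚ // x < (q : ℝ)} := fun x =>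
    (exists_rat_gt x).elim fun q hq => ⟨⟨q, hq⟩⟩
  set G : ℝ → ℝ := fun x => ⨅ q : {q : ℚ // x < (q : ℝ)}, L q.1 with hG_def
  have hbdd : ∀ x : ℝ, BddBelow (Set.range fun q : {q : ℚ // x < (q : ℝ)} => L q.1) := by
    intro x
    refine ⟨0, ?_⟩
    rintro y ⟨i, rfl⟩
    exact hL0 _
  have hGle : ∀ (x : ℝ) (q : ℚ), x < (q : ℝ) → G x ≤ L q := fun x q h =>
    ciInf_le (hbdd x) ⟨q, h⟩
  have hGge : ∀ (x : ℝ) (q : ℚ), (q : ℝ) < x → L q ≤ G x := fun x q h =>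
    le_ciInf fun i => hLmono (by exact_mod_cast (h.trans i.2).le)
  have hGmono : Monotone G := fun x y hxy =>
    le_ciInf fun i => hGle x i.1 (lt_of_le_of_lt hxy i.2)
  have hG0 : ∀ x, 0 ≤ G x := fun x => le_ciInf fun i => hL0 _
  have hG1 : ∀ x, G x ≤ 1 := fun x =>
    (exists_rat_gt x).elim fun q hq => (hGle x q hq).trans (hL1 q)
  -- tail bounds
  have hLtail : ∀ q : ℚ, (q : ℝ) < 0 → L q ≤ C * Real.exp (lam * q) := by
    intro q hq
    apply le_of_tendsto (hLq q)
    filter_upwards [hm.eventually_ge_atTop N₁] with k hk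
    exact htail (m k) hk q hq
  have hGtail : ∀ u : ℝ, u < 0 → G u ≤ C * Real.exp (lam * u) := by
    intro u hu
    by_contra hcon
    push_neg at hcon
    have hopen : IsOpen {t : ℝ | C * Real.exp (lam * t) < G u} :=
      isOpen_lt (continuous_const.mul (Real.continuous_exp.comp (continuous_const.mul continuous_id))) continuous_const
    obtain ⟨δ, hδ, hball⟩ := Metric.isOpen_iff.1 hopen u hcon
    obtain ⟨q, hq1, hq2⟩ := exists_rat_btwn
      (show u < min 0 (u + δ) by rw [lt_min_iff]; exact ⟨hu, by linarith⟩)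
    have hq0 : (q : ℝ) < 0 := hq2.trans_le (min_le_left _ _)
    have hqd : (q : ℝ) < u + δ := hq2.trans_le (min_le_right _ _)
    have hqb : (q : ℝ) ∈ Metric.ball u δ := by
      rw [Metric.mem_ball, Real.dist_eq, _root_.abs_of_pos (by linarith)]
      linarith
    have hlt : C * Real.exp (lam * q) < G u := hball hqb
    exact absurd ((hGle u q hq1).trans (hLtail q hq0)) (not_le.2 hlt)
  have hScnt : {x : ℝ | ¬ContinuousAt G x}.Countable := hGmono.countable_not_continuousAt
  have hkey : ∀ x : ℝ, ContinuousAt G x → Tendsto (fun k => F (m k) x) atTop (nhds (G x)) :=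
    fun x hx => aux_tendsto_of_rat (fun k => F (m k)) (fun k => hFmono (m k)) L hLq G hGle hGge x hx
  -- dominating function
  set bound : ℝ → ℝ := fun t => (C + 1) * min (Real.exp ((lam - A) * t)) (Real.exp (-A * t))
    with hbound_def
  have hbound_int : Integrable bound := aux_integrable_bound hA0 (sub_pos.2 hA) (C + 1)
  have hdom : ∀ (v : ℝ → ℝ), (∀ t, 0 ≤ v t) → (∀ t, v t ≤ 1) →
      (∀ t, t < 0 → v t ≤ C * Real.exp (lam * t)) →
      ∀ t, v t * Real.exp (-A * t) ≤ bound t := by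
    intro v h0 h1 htl t
    show v t * Real.exp (-A * t) ≤ (C + 1) * min (Real.exp ((lam - A) * t)) (Real.exp (-A * t))
    rw [mul_min_of_nonneg _ _ (by positivity : (0:ℝ) ≤ C + 1)]
    apply le_min
    · by_cases ht : t < 0
      · have e1 : lam * t + -A * t = (lam - A) * t := by ring
        calc v t * Real.exp (-A * t) ≤ (C * Real.exp (lam * t)) * Real.exp (-A * t) :=
              mul_le_mul_of_nonneg_right (htl t ht) (Real.exp_nonneg _)
          _ = C * Real.exp ((lam - A) * t) := by rw [mul_assoc, ← Real.exp_add, e1]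
          _ ≤ (C + 1) * Real.exp ((lam - A) * t) := by
              nlinarith [Real.exp_pos ((lam - A) * t)]
      · push_neg at ht
        have e2 : Real.exp (-A * t) ≤ Real.exp ((lam - A) * t) :=
          Real.exp_le_exp.2 (by nlinarith)
        calc v t * Real.exp (-A * t) ≤ 1 * Real.exp (-A * t) :=
              mul_le_mul_of_nonneg_right (h1 t) (Real.exp_nonneg _)
          _ ≤ (C + 1) * Real.exp ((lam - A) * t) := by
              nlinarith [Real.exp_pos (-A * t), Real.exp_pos ((lam - A) * t)]
    · calc v t * Real.exp (-A * t) ≤ 1 * Real.exp (-A * t) :=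
          mul_le_mul_of_nonneg_right (h1 t) (Real.exp_nonneg _)
        _ ≤ (C + 1) * Real.exp (-A * t) := by nlinarith [Real.exp_pos (-A * t)]
  -- a.e. convergence
  have hae : ∀ᵐ x : ℝ, Tendsto (fun k => F (m k) x) atTop (nhds (G x)) := by
    have h' : ∀ᵐ x : ℝ, ContinuousAt G x := by
      rw [ae_iff]
      exact hScnt.measure_zero _
    filter_upwards [h'] with x hx using hkey x hx
  -- equality of damped Fourier integrals
  have heq : ∀ y : ℝ,
      (∫ t : ℝ, ((G t : ℂ) * (Real.exp (-A * t) : ℂ)) * Complex.exp (Complex.I * t * y))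
        = ∫ t : ℝ, ((Φ t * Real.exp (-A * t) : ℝ) : ℂ) * Complex.exp (Complex.I * t * y) := by
    intro y
    have h1 := (hconv 0 y).comp hm
    simp only [add_zero] at h1
    refine tendsto_nhds_unique ?_ h1
    apply tendsto_integral_filter_of_dominated_convergence bound
    · apply Eventually.of_forall
      intro k
      apply Measurable.aestronglyMeasurable
      apply Measurable.mul
      · exact (Complex.measurable_ofReal.comp (hFmono (m k)).measurable).mul
          (Continuous.measurable (by fun_prop))
      · exact Continuous.measurable (by fun_prop)
    · filter_upwards [hm.eventually_ge_atTop N₁] with k hk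
      apply ae_of_all
      intro t
      rw [norm_mul, norm_mul, aux_exp_norm_one, mul_one, Complex.norm_real, Complex.norm_real,
        Real.norm_eq_abs, Real.norm_eq_abs, _root_.abs_of_nonneg (hF0 _ _),
        _root_.abs_of_nonneg (Real.exp_nonneg _)]
      exact hdom (F (m k)) (hF0 (m k)) (hF1 (m k)) (fun t ht => htail (m k) hk t ht) t
    · exact hbound_int
    · filter_upwards [hae] with x hx
      have hcont : Continuous fun s : ℝ =>
          ((s : ℂ) * (Real.exp (-A * x) : ℂ)) * Complex.exp (Complex.I * x * y) := by
        continuity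
      exact (hcont.tendsto (G x)).comp hx
  -- integrability of G e^{-A·}
  have hGreal_int : Integrable (fun t => G t * Real.exp (-A * t)) := by
    apply hbound_int.mono'
      ((hGmono.measurable.mul (Continuous.measurable (by fun_prop))).aestronglyMeasurable)
    apply ae_of_all
    intro t
    change ‖G t * Real.exp (-A * t)‖ ≤ bound t
    rw [Real.norm_eq_abs, _root_.abs_of_nonneg (mul_nonneg (hG0 t) (Real.exp_nonneg _))]
    exact hdom G hG0 hG1 hGtail t
  by_cases hg : Integrable (fun t : ℝ => ((Φ t * Real.exp (-A * t) : ℝ) : ℂ)) volume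
  · -- main case : both damped functions are integrable, use Fourier inversion
    have hfC_int : Integrable (fun t : ℝ => ((G t * Real.exp (-A * t) : ℝ) : ℂ)) :=
      hGreal_int.ofReal
    have hintf : ∀ y : ℝ, Integrable
        (fun t : ℝ => ((G t * Real.exp (-A * t) : ℝ) : ℂ) * Complex.exp (Complex.I * t * y)) := by
      intro y
      apply hfC_int.norm.mono'
      · exact hfC_int.1.mul (Continuous.aestronglyMeasurable (by fun_prop))
      · apply ae_of_all
        intro t
        rw [norm_mul, aux_exp_norm_one, mul_one]
    have hintg : ∀ y : ℝ, Integrable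
        (fun t : ℝ => ((Φ t * Real.exp (-A * t) : ℝ) : ℂ) * Complex.exp (Complex.I * t * y)) := by
      intro y
      apply hg.norm.mono'
      · exact hg.1.mul (Continuous.aestronglyMeasurable (by fun_prop))
      · apply ae_of_all
        intro t
        rw [norm_mul, aux_exp_norm_one, mul_one]
    set h : ℝ → ℂ := fun t =>
      ((G t * Real.exp (-A * t) : ℝ) : ℂ) - ((Φ t * Real.exp (-A * t) : ℝ) : ℂ) with hh_def
    have hh_int : Integrable h := hfC_int.sub hg
    have hsub0 : ∀ y : ℝ, (∫ t : ℝ, h t * Complex.exp (Complex.I * t * y)) = 0 := by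
      intro y
      rw [hh_def]
      simp only [sub_mul]
      rw [integral_sub (hintf y) (hintg y), sub_eq_zero]
      have := heq y
      simp only [Complex.ofReal_mul] at this ⊢
      exact this
    have hFh : ∀ w : ℝ, 𝓕 h w = 0 := by
      intro w
      rw [Real.fourier_eq']
      rw [← hsub0 (-(2 * Real.pi * w))]
      congr 1
      ext v
      rw [smul_eq_mul, mul_comm]
      congr 1
      congr 1
      simp only [RCLike.inner_apply, conj_trivial]
      push_cast
      ring
    have hFh_int : Integrable (𝓕 h) := by
      rw [show 𝓕 h = (fun _ => (0 : ℂ)) from funext hFh]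
      exact integrable_zero _ _ _
    have hinv : ∀ v : ℝ, ContinuousAt G v → G v = Φ v := by
      intro v hv
      have hcont : ContinuousAt h v := by
        rw [hh_def]
        apply ContinuousAt.sub
        · exact Complex.continuous_ofReal.continuousAt.comp
            (hv.mul (Real.continuous_exp.comp (by fun_prop)).continuousAt)
        · exact (Complex.continuous_ofReal.comp
            (hΦc.mul (Real.continuous_exp.comp (by fun_prop)))).continuousAt
      have hi := hh_int.fourierInv_fourier_eq hFh_int hcont
      rw [show 𝓕 h = (fun _ => (0 : ℂ)) from funext hFh] at hi
      have hz0 : (𝓕⁻ (fun _ : ℝ => (0 : ℂ)) : ℝ → ℂ) v = 0 := by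
        simp [Real.fourierInv_eq]
      rw [hz0] at hi
      have hfg : ((G v * Real.exp (-A * v) : ℝ) : ℂ) = ((Φ v * Real.exp (-A * v) : ℝ) : ℂ) :=
        sub_eq_zero.1 hi.symm
      have hreal : G v * Real.exp (-A * v) = Φ v * Real.exp (-A * v) := by exact_mod_cast hfg
      exact mul_right_cancel₀ (Real.exp_ne_zero _) hreal
    have hdense : Dense {x : ℝ | ¬ContinuousAt G x}ᶜ := hScnt.dense_compl ℝ
    have hGΦ : ∀ x : ℝ, G x = Φ x := by
      intro x
      have key2 : ∀ ε : ℝ, 0 < ε → G x ≤ Φ x + ε ∧ Φ x - ε ≤ G x := by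
        intro ε hε
        obtain ⟨δ, hδ, hδ'⟩ := Metric.continuousAt_iff.1 hΦc.continuousAt ε hε
        obtain ⟨y1, hy1o, hy1c⟩ := hdense.inter_open_nonempty (Set.Ioo x (x + δ)) isOpen_Ioo
          ⟨x + δ / 2, by constructor <;> linarith⟩
        obtain ⟨y2, hy2o, hy2c⟩ := hdense.inter_open_nonempty (Set.Ioo (x - δ) x) isOpen_Ioo
          ⟨x - δ / 2, by constructor <;> linarith⟩
        have e1 : G y1 = Φ y1 := hinv y1 (not_not.1 hy1c)
        have e2 : G y2 = Φ y2 := hinv y2 (not_not.1 hy2c)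
        have d1 : |Φ y1 - Φ x| < ε := by
          have := hδ' (show dist y1 x < δ by
            rw [Real.dist_eq, _root_.abs_of_pos (by linarith [hy1o.1])]; linarith [hy1o.2])
          rwa [Real.dist_eq] at this
        have d2 : |Φ y2 - Φ x| < ε := by
          have := hδ' (show dist y2 x < δ by
            rw [Real.dist_eq, _root_.abs_of_neg (by linarith [hy2o.2])]; linarith [hy2o.1])
          rwa [Real.dist_eq] at this
        rw [abs_lt] at d1 d2
        constructor
        · have : G x ≤ G y1 := hGmono (le_of_lt hy1o.1)
          rw [e1] at this
          linarith [d1.2]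
        · have : G y2 ≤ G x := hGmono (le_of_lt hy2o.2)
          rw [e2] at this
          linarith [d2.1]
      have h1 : G x ≤ Φ x := aux_le_of_forall_pos fun ε hε => (key2 ε hε).1
      have h2 : Φ x ≤ G x := aux_le_of_forall_pos fun ε hε => by linarith [(key2 ε hε).2]
      linarith
    have hcontz : ContinuousAt G z := by
      rw [show G = Φ from funext hGΦ]
      exact hΦc.continuousAt
    have := hkey z hcontz
    rwa [hGΦ z] at this
  · -- degenerate case : the limit integrand is not integrable, contradiction with tightness
    exfalso
    have h0 := heq 0
    have hrhs0 : (∫ t : ℝ, ((Φ t * Real.exp (-A * t) : ℝ) : ℂ)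
        * Complex.exp (Complex.I * t * (0:ℝ))) = 0 := by
      simp only [Complex.ofReal_zero, mul_zero, Complex.exp_zero, mul_one]
      exact integral_undef hg
    have hlhs : (∫ t : ℝ, ((G t : ℂ) * (Real.exp (-A * t) : ℂ))
        * Complex.exp (Complex.I * t * (0:ℝ)))
        = ((∫ t : ℝ, G t * Real.exp (-A * t)) : ℂ) := by
      simp only [Complex.ofReal_zero, mul_zero, Complex.exp_zero, mul_one, ← Complex.ofReal_mul,
        integral_ofReal]
    rw [hlhs, hrhs0] at h0
    have hreal0 : (∫ t : ℝ, G t * Real.exp (-A * t)) = 0 := by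
      have h2 : ∫ t : ℝ, ((G t * Real.exp (-A * t) : ℝ) : ℂ)
          = ((∫ t : ℝ, G t * Real.exp (-A * t) : ℝ) : ℂ) := integral_ofReal
      simp only [Complex.ofReal_mul] at h2
      rw [h0] at h2
      exact_mod_cast h2.symm
    have hae0 : ∀ᵐ t : ℝ, G t * Real.exp (-A * t) = 0 := by
      have := (integral_eq_zero_iff_of_nonneg
        (fun t => mul_nonneg (hG0 t) (Real.exp_nonneg _)) hGreal_int).1 hreal0
      filter_upwards [this] with t ht using ht
    obtain ⟨M, hM⟩ := htight (1/2) (by norm_num)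
    obtain ⟨q, hq⟩ := exists_rat_gt M
    have hLqhalf : (1:ℝ)/2 ≤ L q := by
      apply ge_of_tendsto (hLq q)
      apply Eventually.of_forall
      intro k
      have hsub : Set.Icc (-M) M ⊆ Set.Iic (q : ℝ) := fun t ht => le_trans ht.2 hq.le
      have h1 : ((μ (m k)) (Set.Icc (-M) M)).toReal ≤ F (m k) q :=
        ENNReal.toReal_mono (measure_ne_top _ _) (measure_mono hsub)
      have h2 : (1:ℝ)/2 ≤ ((μ (m k)) (Set.Icc (-M) M)).toReal := by
        have hc := hM (m k)
        rw [prob_compl_eq_one_sub measurableSet_Icc] at hc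
        rw [ENNReal.toReal_sub_of_le prob_le_one ENNReal.one_ne_top] at hc
        simp only [ENNReal.toReal_one] at hc
        linarith
      linarith
    have hGhalf : ∀ x : ℝ, (q : ℝ) < x → (1:ℝ)/2 ≤ G x := fun x hx =>
      hLqhalf.trans (hGge x q hx)
    have hsubset : Set.Ioi (q : ℝ) ⊆ {t : ℝ | ¬(G t * Real.exp (-A * t) = 0)} := by
      intro x hx
      simp only [Set.mem_setOf_eq]
      exact mul_ne_zero (by have := hGhalf x hx; linarith) (Real.exp_ne_zero _)
    have hvol : volume (Set.Ioi (q : ℝ)) = 0 := measure_mono_null hsubset (ae_iff.1 hae0)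
    simp [Real.volume_Ioi] at hvol
end
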